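/- Let (W_∗, F^∗) be an ℝ-mixed Hodge structure on V. Then there exists a ℂ-linear automorphism b of V_ℂ such that (i) b(W_i ⊗ ℂ) = W_i ⊗ ℂ and (b − id)(W_i ⊗ ℂ) ⊆ W_{i-1} ⊗ ℂ for every i, (ii) (W_∗, bF^∗) is an ℝ-mixed Hodge structure on V, and (iii) (W_∗, bF^∗) is ℝ-split: its Deligne subspaces Ĩ^{p,q} satisfy σ(Ĩ^{p,q}) = Ĩ^{q,p} for all p,q. -/

import Mathlib

open TensorProduct

noncomputable section

namespace MHS

instance : RingHomSurjective (starRingEnd ℂ) :=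
  ⟨fun x => ⟨star x, star_star x⟩⟩

variable (V : Type*) [AddCommGroup V] [Module ℝ V]

/-- The inclusion `v ↦ 1 ⊗ v` of `V` into its complexification `ℂ ⊗[ℝ] V`. -/
def incl : V →ₗ[ℝ] ℂ ⊗[ℝ] V := TensorProduct.mk ℝ ℂ V 1

/-- Complex conjugation on the complexification `ℂ ⊗[ℝ] V`, as a
conjugate-linear (i.e. `starRingEnd ℂ`-semilinear) map. -/
def conjC : (ℂ ⊗[ℝ] V) →ₛₗ[starRingEnd ℂ] (ℂ ⊗[ℝ] V) where
  toFun := LinearMap.rTensor V (Complex.conjAe.toLinearMap : ℂ →ₗ[ℝ] ℂ)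
  map_add' := fun x y => map_add _ x y
  map_smul' := by
    intro c x
    induction x using TensorProduct.induction_on with
    | zero => simp
    | tmul a v =>
        simp only [TensorProduct.smul_tmul', LinearMap.rTensor_tmul, smul_eq_mul,
          AlgEquiv.toLinearMap_apply, map_mul, starRingEnd_apply]
        rfl
    | add x y hx hy =>
        simp only [smul_add, map_add]
        exact congrArg₂ (· + ·) hx hy

/-- The complexification `W ⊗ ℂ` of a real subspace `W ⊆ V`, as a complex
subspace of `ℂ ⊗[ℝ] V`. -/
def cx (W : Submodule ℝ V) : Submodule ℂ (ℂ ⊗[ℝ] V) :=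
  Submodule.span ℂ (incl V '' (W : Set V))

variable {V}

/-- `(W, F)` is an `ℝ`-mixed Hodge structure on `V`:  `W` is an increasing
exhaustive filtration of `V` by real subspaces, `F` a decreasing exhaustive
filtration of `ℂ ⊗[ℝ] V` by complex subspaces, and for every `n, p` the induced
filtration on `Gr^W_n = (W n ⊗ ℂ)/(W (n-1) ⊗ ℂ)` satisfies the weight `n`
Hodge decomposition conditions (expressed here at the level of preimages in
`W n ⊗ ℂ` of the relevant subspaces of the quotient). -/
structure IsRMHS (W : ℤ → Submodule ℝ V) (F : ℤ → Submodule ℂ (ℂ ⊗[ℝ] V)) : Prop where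
  monoW : Monotone W
  antiF : Antitone F
  w_bot : ∃ a : ℤ, ∀ i ≤ a, W i = ⊥
  w_top : ∃ b : ℤ, ∀ i, b ≤ i → W i = ⊤
  f_top : ∃ a : ℤ, ∀ p ≤ a, F p = ⊤
  f_bot : ∃ b : ℤ, ∀ p, b ≤ p → F p = ⊥
  gr_inf : ∀ n p : ℤ,
      ((F p ⊓ cx V (W n)) ⊔ cx V (W (n-1))) ⊓
        ((((F (n+1-p)).map (conjC V)) ⊓ cx V (W n)) ⊔ cx V (W (n-1)))
      = cx V (W (n-1))
  gr_sup : ∀ n p : ℤ,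
      (F p ⊓ cx V (W n)) ⊔ ((((F (n+1-p)).map (conjC V)) ⊓ cx V (W n)) ⊔ cx V (W (n-1)))
      = cx V (W n)

/-- The subspace `R^{p,q} = (W_{p+q} ⊗ ℂ) ∩ F^p`. -/
def Rpq (W : ℤ → Submodule ℝ V) (F : ℤ → Submodule ℂ (ℂ ⊗[ℝ] V)) (p q : ℤ) :
    Submodule ℂ (ℂ ⊗[ℝ] V) :=
  cx V (W (p + q)) ⊓ F p

/-- The subspace
`L^{p,q} = (W_{p+q} ⊗ ℂ) ∩ σ(F^q) + Σ_{i ≥ 2} (W_{p+q-i} ⊗ ℂ) ∩ σ(F^{q-i+1})`. -/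
def Lpq (W : ℤ → Submodule ℝ V) (F : ℤ → Submodule ℂ (ℂ ⊗[ℝ] V)) (p q : ℤ) :
    Submodule ℂ (ℂ ⊗[ℝ] V) :=
  (cx V (W (p + q)) ⊓ (F q).map (conjC V)) ⊔
    ⨆ i : ℤ, ⨆ _ : 2 ≤ i, (cx V (W (p + q - i)) ⊓ (F (q - i + 1)).map (conjC V))

/-- The Deligne subspace `I^{p,q} = R^{p,q} ∩ L^{p,q}`. -/
def Ipq (W : ℤ → Submodule ℝ V) (F : ℤ → Submodule ℂ (ℂ ⊗[ℝ] V)) (p q : ℤ) :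
    Submodule ℂ (ℂ ⊗[ℝ] V) :=
  Rpq W F p q ⊓ Lpq W F p q

end MHS

namespace MHS
open Complex
variable (V : Type*) [AddCommGroup V] [Module ℝ V]

/-- Real part map `ℂ ⊗[ℝ] V →ₗ[ℝ] V`. -/
def rea : (ℂ ⊗[ℝ] V) →ₗ[ℝ] V :=
  TensorProduct.lift
    { toFun := fun c => c.re • (LinearMap.id : V →ₗ[ℝ] V)
      map_add' := by intro a b; ext v; simp [add_smul]
      map_smul' := by intro a b; ext v; simp [mul_smul] }

/-- Imaginary part map `ℂ ⊗[ℝ] V →ₗ[ℝ] V`. -/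
def ima : (ℂ ⊗[ℝ] V) →ₗ[ℝ] V :=
  TensorProduct.lift
    { toFun := fun c => c.im • (LinearMap.id : V →ₗ[ℝ] V)
      map_add' := by intro a b; ext v; simp [add_smul]
      map_smul' := by intro a b; ext v; simp [mul_smul] }

variable {V}

@[simp] lemma rea_tmul (c : ℂ) (v : V) : rea V (c ⊗ₜ[ℝ] v) = c.re • v := rfl
@[simp] lemma ima_tmul (c : ℂ) (v : V) : ima V (c ⊗ₜ[ℝ] v) = c.im • v := rfl
@[simp] lemma rea_incl (v : V) : rea V (incl V v) = v := by
  show rea V ((1:ℂ) ⊗ₜ[ℝ] v) = v; simp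
@[simp] lemma ima_incl (v : V) : ima V (incl V v) = 0 := by
  show ima V ((1:ℂ) ⊗ₜ[ℝ] v) = 0; simp

lemma incl_apply (v : V) : incl V v = (1:ℂ) ⊗ₜ[ℝ] v := rfl

lemma eq_incl_rea_add_smul_incl_ima (x : ℂ ⊗[ℝ] V) :
    x = incl V (rea V x) + Complex.I • incl V (ima V x) := by
  induction x using TensorProduct.induction_on with
  | zero => simp
  | tmul c v =>
      simp only [rea_tmul, ima_tmul, incl_apply, TensorProduct.tmul_smul]
      rw [smul_comm Complex.I c.im ((1:ℂ) ⊗ₜ[ℝ] v),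
        ← IsScalarTower.algebraMap_smul ℂ c.re ((1:ℂ) ⊗ₜ[ℝ] v),
        ← IsScalarTower.algebraMap_smul ℂ c.im (Complex.I • ((1:ℂ) ⊗ₜ[ℝ] v)),
        smul_smul, ← add_smul, TensorProduct.smul_tmul']
      congr 1
      simp [Complex.ext_iff]
  | add x y hx hy =>
      simp only [map_add, smul_add]
      nth_rewrite 1 [hx]; nth_rewrite 1 [hy]; abel

lemma rea_smul (c : ℂ) (x : ℂ ⊗[ℝ] V) :
    rea V (c • x) = c.re • rea V x - c.im • ima V x := by
  induction x using TensorProduct.induction_on with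
  | zero => simp
  | tmul a v =>
      rw [TensorProduct.smul_tmul']
      simp [Complex.mul_re, sub_smul]
      module
  | add x y hx hy => simp only [smul_add, map_add, hx, hy]; abel

lemma ima_smul (c : ℂ) (x : ℂ ⊗[ℝ] V) :
    ima V (c • x) = c.re • ima V x + c.im • rea V x := by
  induction x using TensorProduct.induction_on with
  | zero => simp
  | tmul a v =>
      rw [TensorProduct.smul_tmul']
      simp [Complex.mul_im, add_smul]
      module
  | add x y hx hy => simp only [smul_add, map_add, hx, hy]; abel

lemma mem_cx {S : Submodule ℝ V} {x : ℂ ⊗[ℝ] V} :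
    x ∈ cx V S ↔ rea V x ∈ S ∧ ima V x ∈ S := by
  constructor
  · intro hx
    refine Submodule.span_induction ?_ ?_ ?_ ?_ hx
    · rintro y ⟨v, hv, rfl⟩; simpa using hv
    · simp
    · rintro y z - - ⟨h1, h2⟩ ⟨h3, h4⟩
      rw [map_add, map_add]; exact ⟨S.add_mem h1 h3, S.add_mem h2 h4⟩
    · rintro c y - ⟨h1, h2⟩
      rw [rea_smul, ima_smul]
      exact ⟨S.sub_mem (S.smul_mem _ h1) (S.smul_mem _ h2),
        S.add_mem (S.smul_mem _ h2) (S.smul_mem _ h1)⟩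
  · rintro ⟨h1, h2⟩
    rw [eq_incl_rea_add_smul_incl_ima x]
    exact Submodule.add_mem _
      (Submodule.subset_span ⟨_, h1, rfl⟩)
      (Submodule.smul_mem _ _ (Submodule.subset_span ⟨_, h2, rfl⟩))

end MHS

namespace MHS
variable {V : Type*} [AddCommGroup V] [Module ℝ V]

lemma incl_mem_cx {S : Submodule ℝ V} {v : V} (hv : v ∈ S) : incl V v ∈ cx V S :=
  Submodule.subset_span ⟨v, hv, rfl⟩

lemma cx_mono {S T : Submodule ℝ V} (h : S ≤ T) : cx V S ≤ cx V T := by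
  intro x hx; rw [mem_cx] at hx ⊢; exact ⟨h hx.1, h hx.2⟩

@[simp] lemma cx_bot : cx V (⊥ : Submodule ℝ V) = ⊥ := by
  ext x; simp only [mem_cx, Submodule.mem_bot]
  constructor
  · rintro ⟨h1, h2⟩
    rw [eq_incl_rea_add_smul_incl_ima x, h1, h2]; simp
  · rintro rfl; simp

@[simp] lemma cx_top : cx V (⊤ : Submodule ℝ V) = ⊤ := by
  ext x; simp [mem_cx]

lemma cx_inf (S T : Submodule ℝ V) : cx V (S ⊓ T) = cx V S ⊓ cx V T := by
  ext x; simp only [mem_cx, Submodule.mem_inf]; tauto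

lemma cx_sup (S T : Submodule ℝ V) : cx V (S ⊔ T) = cx V S ⊔ cx V T := by
  ext x; simp only [mem_cx, Submodule.mem_sup]
  constructor
  · rintro ⟨⟨a, ha, b, hb, hab⟩, ⟨c, hc, d, hd, hcd⟩⟩
    refine ⟨incl V a + Complex.I • incl V c, ?_, incl V b + Complex.I • incl V d, ?_, ?_⟩
    · constructor
      · rw [map_add, rea_smul]; simpa using ha
      · rw [map_add, ima_smul]; simpa using hc
    · constructor
      · rw [map_add, rea_smul]; simpa using hb
      · rw [map_add, ima_smul]; simpa using hd
    · rw [eq_incl_rea_add_smul_incl_ima x, ← hab, ← hcd, map_add, map_add, smul_add]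
      abel
  · rintro ⟨y, ⟨hy1, hy2⟩, z, ⟨hz1, hz2⟩, rfl⟩
    exact ⟨⟨_, hy1, _, hz1, (map_add _ y z).symm⟩, ⟨_, hy2, _, hz2, (map_add _ y z).symm⟩⟩

lemma cx_inj {S T : Submodule ℝ V} (h : cx V S = cx V T) : S = T := by
  ext v
  constructor <;> intro hv
  · have : incl V v ∈ cx V T := h ▸ incl_mem_cx hv
    rw [mem_cx] at this; simpa using this.1
  · have : incl V v ∈ cx V S := h ▸ incl_mem_cx hv
    rw [mem_cx] at this; simpa using this.1

@[simp] lemma conjC_incl (v : V) : conjC V (incl V v) = incl V v := by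
  show LinearMap.rTensor V _ ((1:ℂ) ⊗ₜ[ℝ] v) = (1:ℂ) ⊗ₜ[ℝ] v
  simp

@[simp] lemma rea_conjC (x : ℂ ⊗[ℝ] V) : rea V (conjC V x) = rea V x := by
  induction x using TensorProduct.induction_on with
  | zero => simp
  | tmul c v =>
      show rea V ((starRingEnd ℂ c) ⊗ₜ[ℝ] v) = _
      simp
  | add x y hx hy => simp only [map_add, hx, hy]

@[simp] lemma ima_conjC (x : ℂ ⊗[ℝ] V) : ima V (conjC V x) = - ima V x := by
  induction x using TensorProduct.induction_on with
  | zero => simp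
  | tmul c v =>
      show ima V ((starRingEnd ℂ c) ⊗ₜ[ℝ] v) = _
      simp
  | add x y hx hy => simp only [map_add, hx, hy]; abel

@[simp] lemma conjC_conjC (x : ℂ ⊗[ℝ] V) : conjC V (conjC V x) = x := by
  induction x using TensorProduct.induction_on with
  | zero => simp
  | tmul c v =>
      show conjC V ((starRingEnd ℂ c) ⊗ₜ[ℝ] v) = _
      show (starRingEnd ℂ (starRingEnd ℂ c)) ⊗ₜ[ℝ] v = _
      simp
  | add x y hx hy => rw [map_add, map_add, hx, hy]

lemma conjC_injective : Function.Injective (conjC V) := by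
  intro x y hxy
  have := congrArg (conjC V) hxy
  simpa using this

lemma conjC_surjective : Function.Surjective (conjC V) :=
  fun x => ⟨conjC V x, conjC_conjC x⟩

/-- `map conjC` of submodules. -/
notation "mσ" => Submodule.map (conjC _)

lemma mem_mapConj {X : Submodule ℂ (ℂ ⊗[ℝ] V)} {x : ℂ ⊗[ℝ] V} :
    x ∈ Submodule.map (conjC V) X ↔ conjC V x ∈ X := by
  constructor
  · rintro ⟨y, hy, rfl⟩; rwa [conjC_conjC]
  · intro hx; exact ⟨conjC V x, hx, conjC_conjC x⟩

lemma mapConj_mapConj (X : Submodule ℂ (ℂ ⊗[ℝ] V)) :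
    Submodule.map (conjC V) (Submodule.map (conjC V) X) = X := by
  ext x; rw [mem_mapConj, mem_mapConj, conjC_conjC]

lemma mapConj_inf (X Y : Submodule ℂ (ℂ ⊗[ℝ] V)) :
    Submodule.map (conjC V) (X ⊓ Y)
      = Submodule.map (conjC V) X ⊓ Submodule.map (conjC V) Y := by
  ext x; simp only [mem_mapConj, Submodule.mem_inf]

lemma mapConj_sup (X Y : Submodule ℂ (ℂ ⊗[ℝ] V)) :
    Submodule.map (conjC V) (X ⊔ Y)
      = Submodule.map (conjC V) X ⊔ Submodule.map (conjC V) Y :=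
  Submodule.map_sup X Y (conjC V)

lemma mapConj_iSup {ι : Sort*} (X : ι → Submodule ℂ (ℂ ⊗[ℝ] V)) :
    Submodule.map (conjC V) (⨆ i, X i) = ⨆ i, Submodule.map (conjC V) (X i) :=
  Submodule.map_iSup _ _

lemma mapConj_mono {X Y : Submodule ℂ (ℂ ⊗[ℝ] V)} (h : X ≤ Y) :
    Submodule.map (conjC V) X ≤ Submodule.map (conjC V) Y :=
  Submodule.map_mono h

@[simp] lemma mapConj_cx (S : Submodule ℝ V) :
    Submodule.map (conjC V) (cx V S) = cx V S := by
  ext x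
  rw [mem_mapConj, mem_cx, mem_cx, rea_conjC, ima_conjC, neg_mem_iff]

@[simp] lemma mapConj_bot : Submodule.map (conjC V) (⊥ : Submodule ℂ (ℂ ⊗[ℝ] V)) = ⊥ :=
  Submodule.map_bot _

@[simp] lemma mapConj_top : Submodule.map (conjC V) (⊤ : Submodule ℂ (ℂ ⊗[ℝ] V)) = ⊤ := by
  ext x; rw [mem_mapConj]; simp

end MHS

namespace MHS
variable {V : Type*} [AddCommGroup V] [Module ℝ V]

lemma conjC_eq (x : ℂ ⊗[ℝ] V) :
    conjC V x = incl V (rea V x) - Complex.I • incl V (ima V x) := by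
  nth_rewrite 1 [eq_incl_rea_add_smul_incl_ima x]
  rw [map_add, LinearMap.map_smulₛₗ]
  simp [sub_eq_add_neg]

lemma incl_rea_eq (x : ℂ ⊗[ℝ] V) :
    incl V (rea V x) = ((2:ℂ))⁻¹ • (x + conjC V x) := by
  rw [conjC_eq]
  nth_rewrite 2 [eq_incl_rea_add_smul_incl_ima x]
  module

lemma sub_conjC_eq (x : ℂ ⊗[ℝ] V) :
    x - conjC V x = (2 * Complex.I) • incl V (ima V x) := by
  rw [conjC_eq]
  nth_rewrite 1 [eq_incl_rea_add_smul_incl_ima x]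
  module

/-- The real points of a complex subspace. -/
def realPart (X : Submodule ℂ (ℂ ⊗[ℝ] V)) : Submodule ℝ V :=
  (X.restrictScalars ℝ).comap (incl V)

lemma conjStable_eq_cx {X : Submodule ℂ (ℂ ⊗[ℝ] V)}
    (hX : Submodule.map (conjC V) X = X) : X = cx V (realPart X) := by
  apply le_antisymm
  · intro x hx
    have hcx : conjC V x ∈ X := by
      rw [← hX]; exact ⟨x, hx, rfl⟩
    rw [mem_cx]
    constructor
    · show incl V (rea V x) ∈ X
      have : incl V (rea V x) = ((2:ℂ))⁻¹ • (x + conjC V x) := incl_rea_eq x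
      rw [this]; exact X.smul_mem _ (X.add_mem hx hcx)
    · show incl V (ima V x) ∈ X
      have : incl V (ima V x) = ((2 * Complex.I:ℂ))⁻¹ • (x - conjC V x) := by
        rw [sub_conjC_eq x, smul_smul,
          inv_mul_cancel₀ (by simp [Complex.ext_iff] : (2 * Complex.I:ℂ) ≠ 0), one_smul]
      rw [this]; exact X.smul_mem _ (X.sub_mem hx hcx)
  · rw [cx]
    rw [Submodule.span_le]
    rintro y ⟨v, hv, rfl⟩
    exact hv

section helpers
variable {K : Type*} {M : Type*} [DivisionRing K] [AddCommGroup M] [Module K M]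

lemma exists_compl_inf (X N : Submodule K M) :
    ∃ C : Submodule K M, C ≤ X ∧ C ⊓ N = ⊥ ∧ C ⊔ N = X ⊔ N := by
  obtain ⟨q, hq⟩ := Submodule.exists_isCompl ((X ⊓ N).comap X.subtype)
  have hqX : q.map X.subtype ≤ X := by
    rintro x ⟨⟨y, hyX⟩, -, rfl⟩; exact hyX
  refine ⟨q.map X.subtype, hqX, ?_, ?_⟩
  · rw [eq_bot_iff]
    rintro x ⟨⟨⟨y, hyX⟩, hyq, rfl⟩, hxN⟩
    have hmem : (⟨y, hyX⟩ : X) ∈ (X ⊓ N).comap X.subtype :=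
      Submodule.mem_comap.mpr ⟨hyX, hxN⟩
    have h0 : (⟨y, hyX⟩ : X) = 0 := by
      have := hq.disjoint.le_bot (Submodule.mem_inf.mpr ⟨hmem, hyq⟩)
      simpa using this
    simp [h0]
  · apply le_antisymm
    · exact sup_le (le_trans hqX le_sup_left) le_sup_right
    · refine sup_le ?_ le_sup_right
      intro x hxX
      have : (⟨x, hxX⟩ : X) ∈ (X ⊓ N).comap X.subtype ⊔ q := by rw [hq.sup_eq_top]; trivial
      obtain ⟨a, ha, b, hb, hab⟩ := Submodule.mem_sup.mp this
      have hx : x = (a : M) + (b : M) := by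
        have := congrArg (fun z : X => (z : M)) hab
        simpa using this.symm
      rw [hx]
      exact Submodule.add_mem _
        (Submodule.mem_sup_right (Submodule.mem_comap.mp ha).2)
        (Submodule.mem_sup_left ⟨b, hb, rfl⟩)
end helpers

end MHS

namespace MHS
variable {V : Type*} [AddCommGroup V] [Module ℝ V]

section unip

variable {W : ℤ → Submodule ℝ V} {u : (ℂ ⊗[ℝ] V) ≃ₗ[ℂ] (ℂ ⊗[ℝ] V)}

/-- Unipotence relative to the weight filtration. -/
def Unip (W : ℤ → Submodule ℝ V) (u : (ℂ ⊗[ℝ] V) ≃ₗ[ℂ] (ℂ ⊗[ℝ] V)) : Prop :=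
  (∀ i : ℤ, (cx V (W i)).map (u : (ℂ ⊗[ℝ] V) →ₗ[ℂ] (ℂ ⊗[ℝ] V)) = cx V (W i)) ∧
  (∀ i : ℤ, ∀ x ∈ cx V (W i), u x - x ∈ cx V (W (i - 1)))

lemma Unip.mem_iff (hu : Unip W u) {i : ℤ} {x : ℂ ⊗[ℝ] V} :
    u x ∈ cx V (W i) ↔ x ∈ cx V (W i) := by
  constructor
  · intro hx
    rw [← hu.1 i] at hx
    obtain ⟨y, hy, hxy⟩ := hx
    rwa [← u.injective hxy]
  · intro hx
    rw [← hu.1 i]; exact ⟨x, hx, rfl⟩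

lemma Unip.refl : Unip W (LinearEquiv.refl ℂ (ℂ ⊗[ℝ] V)) := by
  constructor
  · intro i; exact Submodule.map_id _
  · intro i x hx; simp

lemma Unip.trans {u₁ u₂ : (ℂ ⊗[ℝ] V) ≃ₗ[ℂ] (ℂ ⊗[ℝ] V)}
    (h1 : Unip W u₁) (h2 : Unip W u₂) : Unip W (u₁.trans u₂) := by
  constructor
  · intro i
    have : ((u₁.trans u₂ : (ℂ ⊗[ℝ] V) ≃ₗ[ℂ] (ℂ ⊗[ℝ] V)) :
        (ℂ ⊗[ℝ] V) →ₗ[ℂ] (ℂ ⊗[ℝ] V)) =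
        (u₂ : (ℂ ⊗[ℝ] V) →ₗ[ℂ] (ℂ ⊗[ℝ] V)).comp (u₁ : (ℂ ⊗[ℝ] V) →ₗ[ℂ] (ℂ ⊗[ℝ] V)) := rfl
    rw [this, Submodule.map_comp, h1.1 i, h2.1 i]
  · intro i x hx
    have : (u₁.trans u₂) x - x = (u₂ (u₁ x) - u₁ x) + (u₁ x - x) := by
      simp only [LinearEquiv.trans_apply]; abel
    rw [this]
    exact Submodule.add_mem _ (h2.2 i _ ((h1.mem_iff).mpr hx)) (h1.2 i x hx)

lemma Unip.graded (hu : Unip W u) (G : Submodule ℂ (ℂ ⊗[ℝ] V)) (n : ℤ) :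
    (G.map (u : (ℂ ⊗[ℝ] V) →ₗ[ℂ] (ℂ ⊗[ℝ] V)) ⊓ cx V (W n)) ⊔ cx V (W (n-1))
      = (G ⊓ cx V (W n)) ⊔ cx V (W (n-1)) := by
  apply le_antisymm
  · rintro x hx
    obtain ⟨y, hy, z, hz, rfl⟩ := Submodule.mem_sup.mp hx
    obtain ⟨⟨w, hw, rfl⟩, hyn⟩ := hy
    simp only [LinearEquiv.coe_coe] at hyn ⊢
    have hwn : w ∈ cx V (W n) := (hu.mem_iff).mp hyn
    have : u w + z = w + ((u w - w) + z) := by abel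
    rw [this]
    exact Submodule.add_mem _ (Submodule.mem_sup_left ⟨hw, hwn⟩)
      (Submodule.mem_sup_right (Submodule.add_mem _ (hu.2 n w hwn) hz))
  · rintro x hx
    obtain ⟨y, hy, z, hz, rfl⟩ := Submodule.mem_sup.mp hx
    have : y + z = u y + ((y - u y) + z) := by abel
    rw [this]
    refine Submodule.add_mem _ (Submodule.mem_sup_left ⟨⟨y, hy.1, rfl⟩, (hu.mem_iff).mpr hy.2⟩) ?_
    refine Submodule.mem_sup_right (Submodule.add_mem _ ?_ hz)
    have := hu.2 n y hy.2
    rw [show y - u y = -(u y - y) by abel]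
    exact Submodule.neg_mem _ this

lemma Unip.gradedConj (hu : Unip W u) (G : Submodule ℂ (ℂ ⊗[ℝ] V)) (n : ℤ) :
    ((G.map (u : (ℂ ⊗[ℝ] V) →ₗ[ℂ] (ℂ ⊗[ℝ] V))).map (conjC V) ⊓ cx V (W n)) ⊔ cx V (W (n-1))
      = (G.map (conjC V) ⊓ cx V (W n)) ⊔ cx V (W (n-1)) := by
  apply le_antisymm
  · rintro x hx
    obtain ⟨y, hy, z, hz, rfl⟩ := Submodule.mem_sup.mp hx
    obtain ⟨⟨w, ⟨v, hv, rfl⟩, rfl⟩, hyn⟩ := hy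
    simp only [LinearEquiv.coe_coe] at *
    -- y = conjC (u v), v ∈ G, y ∈ cx W n
    have hvn : v ∈ cx V (W n) := by
      have h1 : conjC V (conjC V (u v)) ∈ cx V (W n) := by
        rw [← mapConj_cx (W n)]; exact ⟨_, hyn, rfl⟩
      rw [conjC_conjC] at h1
      exact (hu.mem_iff).mp h1
    have key : conjC V (u v) + z = conjC V v + (conjC V (u v - v) + z) := by
      rw [map_sub]; abel
    rw [key]
    refine Submodule.add_mem _
      (Submodule.mem_sup_left ⟨⟨v, hv, rfl⟩, by rw [← mapConj_cx (W n)]; exact ⟨v, hvn, rfl⟩⟩) ?_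
    refine Submodule.mem_sup_right (Submodule.add_mem _ ?_ hz)
    rw [← mapConj_cx (W (n-1))]
    exact ⟨_, hu.2 n v hvn, rfl⟩
  · rintro x hx
    obtain ⟨y, hy, z, hz, rfl⟩ := Submodule.mem_sup.mp hx
    obtain ⟨⟨v, hv, rfl⟩, hyn⟩ := hy
    -- y = conjC v, v ∈ G, conjC v ∈ cx W n
    have hvn : v ∈ cx V (W n) := by
      have : conjC V (conjC V v) ∈ cx V (W n) := by
        rw [← mapConj_cx (W n)]; exact ⟨_, hyn, rfl⟩
      rwa [conjC_conjC] at this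
    have key : conjC V v + z = conjC V (u v) + (conjC V (v - u v) + z) := by
      rw [map_sub]; abel
    rw [key]
    refine Submodule.add_mem _
      (Submodule.mem_sup_left ⟨⟨u v, ⟨v, hv, rfl⟩, rfl⟩, ?_⟩) ?_
    · rw [← mapConj_cx (W n)]
      exact ⟨u v, (hu.mem_iff).mpr hvn, rfl⟩
    refine Submodule.mem_sup_right (Submodule.add_mem _ ?_ hz)
    rw [← mapConj_cx (W (n-1))]
    refine ⟨v - u v, ?_, rfl⟩
    rw [show v - u v = -(u v - v) by abel]
    exact Submodule.neg_mem _ (hu.2 n v hvn)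

lemma sup3 (a b c : Submodule ℂ (ℂ ⊗[ℝ] V)) : a ⊔ (b ⊔ c) = (a ⊔ c) ⊔ (b ⊔ c) := by
  rw [sup_sup_sup_comm, sup_idem, sup_assoc]

lemma Unip.isRMHS {F : ℤ → Submodule ℂ (ℂ ⊗[ℝ] V)} (hu : Unip W u)
    (h : IsRMHS W F) :
    IsRMHS W (fun p => (F p).map (u : (ℂ ⊗[ℝ] V) →ₗ[ℂ] (ℂ ⊗[ℝ] V))) := by
  constructor
  · exact h.monoW
  · intro p q hpq; exact Submodule.map_mono (h.antiF hpq)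
  · exact h.w_bot
  · exact h.w_top
  · obtain ⟨a, ha⟩ := h.f_top
    exact ⟨a, fun p hp => by rw [ha p hp, Submodule.map_top, LinearEquiv.range]⟩
  · obtain ⟨b, hb⟩ := h.f_bot
    exact ⟨b, fun p hp => by rw [hb p hp, Submodule.map_bot]⟩
  · intro n p
    rw [hu.graded (F p) n, hu.gradedConj (F (n+1-p)) n]
    exact h.gr_inf n p
  · intro n p
    rw [sup3, hu.graded (F p) n, hu.gradedConj (F (n+1-p)) n, ← sup3]
    exact h.gr_sup n p

end unip
end MHS
namespace MHS
variable {V : Type*} [AddCommGroup V] [Module ℝ V]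
variable {W : ℤ → Submodule ℝ V} {u : (ℂ ⊗[ℝ] V) ≃ₗ[ℂ] (ℂ ⊗[ℝ] V)}

lemma Unip.map_inf_cx (hu : Unip W u) (A : Submodule ℂ (ℂ ⊗[ℝ] V)) (i : ℤ) :
    (A ⊓ cx V (W i)).map (u : (ℂ ⊗[ℝ] V) →ₗ[ℂ] (ℂ ⊗[ℝ] V))
      = A.map (u : (ℂ ⊗[ℝ] V) →ₗ[ℂ] (ℂ ⊗[ℝ] V)) ⊓ cx V (W i) := by
  apply le_antisymm
  · rintro x ⟨a, ⟨haA, hai⟩, rfl⟩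
    exact ⟨⟨a, haA, rfl⟩, by simpa using (hu.mem_iff).mpr hai⟩
  · rintro x ⟨⟨a, haA, rfl⟩, hxi⟩
    simp only [LinearEquiv.coe_coe] at hxi ⊢
    exact ⟨a, ⟨haA, (hu.mem_iff).mp hxi⟩, rfl⟩

/-- If `u` fixes `X` pointwise then `map u A ⊓ X = A ⊓ X` whenever ... (pointwise fix
on a submodule containing X). -/
lemma map_inf_of_fix {X : Submodule ℂ (ℂ ⊗[ℝ] V)} (A : Submodule ℂ (ℂ ⊗[ℝ] V))
    (hfix : ∀ x ∈ X, u x = x) :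
    A.map (u : (ℂ ⊗[ℝ] V) →ₗ[ℂ] (ℂ ⊗[ℝ] V)) ⊓ X = A ⊓ X := by
  have hfix' : ∀ x ∈ X, u.symm x = x := by
    intro x hx
    have : u (u.symm x) = u x := by rw [u.apply_symm_apply, hfix x hx]
    exact u.injective this
  apply le_antisymm
  · rintro x ⟨⟨a, haA, rfl⟩, hX⟩
    simp only [LinearEquiv.coe_coe] at hX ⊢
    have ha : u a = a := by
      have h1 := hfix' _ hX
      rw [u.symm_apply_apply] at h1
      exact h1.symm
    rw [ha]
    exact ⟨haA, ha ▸ hX⟩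
  · rintro x ⟨hA, hX⟩
    exact ⟨⟨x, hA, by simpa using hfix x hX⟩, hX⟩

end MHS

namespace MHS
variable {V : Type*} [AddCommGroup V] [Module ℝ V]

variable (W : ℤ → Submodule ℝ V) (G : ℤ → Submodule ℂ (ℂ ⊗[ℝ] V))

/-- Preimage in `W_n ⊗ ℂ` of the induced filtration on `Gr^W_n`. -/
def DD (n p : ℤ) : Submodule ℂ (ℂ ⊗[ℝ] V) :=
  (G p ⊓ cx V (W n)) ⊔ cx V (W (n-1))

/-- Preimage in `W_n ⊗ ℂ` of the conjugate induced filtration on `Gr^W_n`. -/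
def DS (n q : ℤ) : Submodule ℂ (ℂ ⊗[ℝ] V) :=
  ((G q).map (conjC V) ⊓ cx V (W n)) ⊔ cx V (W (n-1))

/-- Preimage in `W_n ⊗ ℂ` of the Hodge piece `H^{p, n-p}` of `Gr^W_n`. -/
def HP (n p : ℤ) : Submodule ℂ (ℂ ⊗[ℝ] V) :=
  DD W G n p ⊓ DS W G n (n - p)

variable {W G}

section hodge


lemma W'_le_Wn (hG : IsRMHS W G) (n : ℤ) : cx V (W (n-1)) ≤ cx V (W n) :=
  cx_mono (hG.monoW (by omega))

lemma W'_le_DD (n p : ℤ) : cx V (W (n-1)) ≤ DD W G n p := le_sup_right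
lemma W'_le_DS (n q : ℤ) : cx V (W (n-1)) ≤ DS W G n q := le_sup_right
lemma W'_le_HP (n p : ℤ) : cx V (W (n-1)) ≤ HP W G n p :=
  le_inf (W'_le_DD n p) (W'_le_DS n (n-p))

lemma DD_le_Wn (hG : IsRMHS W G) (n p : ℤ) : DD W G n p ≤ cx V (W n) :=
  sup_le inf_le_right (W'_le_Wn hG n)

lemma DS_le_Wn (hG : IsRMHS W G) (n q : ℤ) : DS W G n q ≤ cx V (W n) :=
  sup_le inf_le_right (W'_le_Wn hG n)

lemma HP_le_Wn (hG : IsRMHS W G) (n p : ℤ) : HP W G n p ≤ cx V (W n) :=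
  le_trans inf_le_left (DD_le_Wn hG n p)

lemma DD_anti (hG : IsRMHS W G) (n : ℤ) {p p' : ℤ} (h : p ≤ p') : DD W G n p' ≤ DD W G n p :=
  sup_le_sup_right (inf_le_inf_right _ (hG.antiF h)) _

lemma DS_anti (hG : IsRMHS W G) (n : ℤ) {q q' : ℤ} (h : q ≤ q') : DS W G n q' ≤ DS W G n q :=
  sup_le_sup_right (inf_le_inf_right _ (mapConj_mono (hG.antiF h))) _

lemma mapConj_DD (n p : ℤ) : (DD W G n p).map (conjC V) = DS W G n p := by
  rw [DD, DS, mapConj_sup, mapConj_inf, mapConj_cx, mapConj_cx]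

lemma mapConj_DS (n q : ℤ) : (DS W G n q).map (conjC V) = DD W G n q := by
  rw [DD, DS, mapConj_sup, mapConj_inf, mapConj_cx, mapConj_cx, mapConj_mapConj]

lemma mapConj_HP (n p : ℤ) : (HP W G n p).map (conjC V) = HP W G n (n - p) := by
  rw [HP, HP, mapConj_inf, mapConj_DD, mapConj_DS, show n - (n - p) = p by ring]
  exact inf_comm _ _

lemma gr_inf' (hG : IsRMHS W G) (n p : ℤ) : DD W G n p ⊓ DS W G n (n + 1 - p) = cx V (W (n-1)) :=
  hG.gr_inf n p

lemma gr_sup' (hG : IsRMHS W G) (n p : ℤ) : DD W G n p ⊔ DS W G n (n + 1 - p) = cx V (W n) := by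
  have := hG.gr_sup n p
  rw [DD, DS, sup_assoc]
  rw [show cx V (W (n-1)) ⊔ ((G (n+1-p)).map (conjC V) ⊓ cx V (W n) ⊔ cx V (W (n-1)))
      = (G (n+1-p)).map (conjC V) ⊓ cx V (W n) ⊔ cx V (W (n-1)) by
    rw [sup_comm, sup_assoc, sup_idem]]
  exact this

/-- The one-step Hodge decomposition `Ḡ^p = Ḡ^{p+1} ⊕ H̄^{p,n-p}` at the preimage level. -/
lemma DD_step (hG : IsRMHS W G) (n p : ℤ) : DD W G n p = DD W G n (p+1) ⊔ HP W G n p := by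
  apply le_antisymm
  · intro x hx
    obtain ⟨g, hg, w, hw, rfl⟩ := Submodule.mem_sup.mp hx
    -- decompose g via gr_sup at p+1
    have hgWn : g ∈ cx V (W n) := hg.2
    have : g ∈ DD W G n (p+1) ⊔ DS W G n (n + 1 - (p+1)) := by
      rw [gr_sup' hG n (p+1)]; exact hgWn
    obtain ⟨a, ha, c, hc, hac⟩ := Submodule.mem_sup.mp this
    have hcHP : c ∈ HP W G n p := by
      constructor
      · -- c = g - a ∈ DD n p
        have : c = g - a := by rw [← hac]; abel
        rw [this]
        exact Submodule.sub_mem _ (Submodule.mem_sup_left hg) (DD_anti hG n (by omega) ha)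
      · rw [show n + 1 - (p+1) = n - p by ring] at hc
        exact hc
    have : g + w = (a + w) + c := by rw [← hac]; abel
    rw [this]
    exact Submodule.add_mem _
      (Submodule.mem_sup_left (Submodule.add_mem _ ha (W'_le_DD n (p+1) hw)))
      (Submodule.mem_sup_right hcHP)
  · exact sup_le (DD_anti hG n (by omega)) inf_le_left

/-- Full Hodge decomposition at the preimage level. -/
lemma DD_decomp (hG : IsRMHS W G) (n p : ℤ) :
    DD W G n p = cx V (W (n-1)) ⊔ ⨆ r : ℤ, ⨆ _ : p ≤ r, HP W G n r := by
  obtain ⟨b₁, hb₁⟩ := hG.f_bot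
  have base : ∀ p', b₁ ≤ p' → DD W G n p' = cx V (W (n-1)) := by
    intro p' hp'
    rw [DD, hb₁ p' hp', bot_inf_eq, bot_sup_eq]
  have key : ∀ k : ℕ, ∀ p', b₁ - k ≤ p' →
      DD W G n p' = cx V (W (n-1)) ⊔ ⨆ r : ℤ, ⨆ _ : p' ≤ r, HP W G n r := by
    intro k
    induction k with
    | zero =>
        intro p' hp'
        rcases le_or_gt b₁ p' with h | h
        · rw [base p' h]
          apply le_antisymm le_sup_left
          apply sup_le le_rfl
          apply iSup_le; intro r; apply iSup_le; intro hr
          have : HP W G n r ≤ DD W G n r := inf_le_left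
          rw [base r (by omega)] at this
          exact this
        · omega
    | succ k ih =>
        intro p' hp'
        rcases le_or_gt (b₁ - k) p' with h | h
        · exact ih p' h
        · have hp'' : p' = b₁ - (k+1) := by omega
          have hstep := DD_step hG n p'
          rw [ih (p'+1) (by omega)] at hstep
          rw [hstep]
          apply le_antisymm
          · apply sup_le (sup_le le_sup_left ?_) ?_
            · apply iSup_le; intro r; apply iSup_le; intro hr
              exact le_sup_of_le_right (le_iSup_of_le r (le_iSup_of_le (by omega) le_rfl))
            · exact le_sup_of_le_right (le_iSup_of_le p' (le_iSup_of_le le_rfl le_rfl))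
          · apply sup_le (le_sup_of_le_left le_sup_left)
            apply iSup_le; intro r; apply iSup_le; intro hr
            rcases eq_or_lt_of_le hr with rfl | hlt
            · exact le_sup_right
            · exact le_sup_of_le_left
                (le_sup_of_le_right (le_iSup_of_le r (le_iSup_of_le (by omega) le_rfl)))
  rcases le_or_gt b₁ p with h | h
  · exact key 0 p (by omega)
  · exact key (b₁ - p).toNat p (by omega)

/-- Independence of the Hodge pieces at the preimage level. -/
lemma HP_indep (hG : IsRMHS W G) (n p : ℤ) :
    HP W G n p ⊓ (DD W G n (p+1) ⊔ DS W G n (n + 1 - p)) = cx V (W (n-1)) := by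
  apply le_antisymm
  · rintro x ⟨hxH, hxs⟩
    obtain ⟨a, ha, c, hc, hac⟩ := Submodule.mem_sup.mp hxs
    have hcW' : c ∈ cx V (W (n-1)) := by
      have hcD : c ∈ DD W G n p := by
        have : c = x - a := by rw [← hac]; abel
        rw [this]
        exact Submodule.sub_mem _ hxH.1 (DD_anti hG n (by omega) ha)
      rw [← gr_inf' hG n p]
      exact ⟨hcD, hc⟩
    have hxD : x ∈ DD W G n (p+1) := by
      have : x = a + c := hac.symm
      rw [this]
      exact Submodule.add_mem _ ha (W'_le_DD n (p+1) hcW')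
    have : x ∈ DD W G n (p+1) ⊓ DS W G n (n + 1 - (p+1)) := by
      refine ⟨hxD, ?_⟩
      rw [show n + 1 - (p+1) = n - p by ring]
      exact hxH.2
    rw [gr_inf' hG n (p+1)] at this
    exact this
  · exact le_inf (W'_le_HP n p) (le_sup_of_le_left (W'_le_DD n (p+1)))

end hodge
end MHS

namespace MHS
variable {V : Type*} [AddCommGroup V] [Module ℝ V]

set_option maxHeartbeats 1000000 in
theorem stage_step (W : ℤ → Submodule ℝ V) (G : ℤ → Submodule ℂ (ℂ ⊗[ℝ] V))
    (hG : IsRMHS W G) (n : ℤ) :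
    ∃ (u : (ℂ ⊗[ℝ] V) ≃ₗ[ℂ] (ℂ ⊗[ℝ] V)) (B : ℤ → Submodule ℂ (ℂ ⊗[ℝ] V))
      (θ : ℤ → ((ℂ ⊗[ℝ] V) →ₗ[ℂ] (ℂ ⊗[ℝ] V))),
      Unip W u ∧
      (∀ x ∈ cx V (W (n-1)), u x = x) ∧
      (∀ p, (B p).map (conjC V) = B (n-p)) ∧
      (∀ p, B p ≤ cx V (W n)) ∧
      (cx V (W n) = cx V (W (n-1)) ⊔ ⨆ p, B p) ∧
      ((⨆ p, B p) ⊓ cx V (W (n-1)) = ⊥) ∧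
      (∀ p, ((G p).map (u : (ℂ ⊗[ℝ] V) →ₗ[ℂ] (ℂ ⊗[ℝ] V)) ⊓ cx V (W n))
        = (G p ⊓ cx V (W (n-1))) ⊔ ⨆ r, ⨆ _ : p ≤ r, B r) ∧
      (∀ p x, θ p x ∈ B p) ∧
      (∀ p, ∀ x ∈ B p, θ p x = x) ∧
      (∀ p p' : ℤ, p ≠ p' → ∀ x ∈ B p', θ p x = 0) ∧
      (∀ p, ∀ x ∈ cx V (W (n-1)), θ p x = 0) ∧
      (∃ t : Finset ℤ, ∀ p : ℤ, p ∉ t → B p = ⊥) := by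
  classical
  obtain ⟨a₁, ha₁⟩ := hG.f_top
  obtain ⟨b₁, hb₁⟩ := hG.f_bot
  -- Step 1 : the lift spaces Z p
  have hZex : ∀ p : ℤ, ∃ C : Submodule ℂ (ℂ ⊗[ℝ] V),
      C ≤ G p ⊓ cx V (W n) ∧ C ⊓ cx V (W (n-1)) = ⊥ ∧ C ⊔ cx V (W (n-1)) = HP W G n p := by
    intro p
    obtain ⟨C, hC1, hC2, hC3⟩ := exists_compl_inf (G p ⊓ cx V (W n) ⊓ HP W G n p)
      (cx V (W (n-1)))
    refine ⟨C, le_trans hC1 inf_le_left, hC2, ?_⟩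
    rw [hC3]
    apply le_antisymm (sup_le inf_le_right (W'_le_HP n p))
    intro x hx
    have hxD : x ∈ DD W G n p := hx.1
    obtain ⟨g, hg, w, hw, hgw⟩ := Submodule.mem_sup.mp hxD
    have hgHP : g ∈ HP W G n p := by
      have : g = x - w := by rw [← hgw]; abel
      rw [this]
      exact Submodule.sub_mem _ hx (W'_le_HP n p hw)
    have : x = g + w := hgw.symm
    rw [this]
    exact Submodule.add_mem _ (Submodule.mem_sup_left ⟨hg, hgHP⟩) (Submodule.mem_sup_right hw)
  set Z : ℤ → Submodule ℂ (ℂ ⊗[ℝ] V) := fun p => (hZex p).choose with hZdef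
  have hZ1 : ∀ p, Z p ≤ G p ⊓ cx V (W n) := fun p => (hZex p).choose_spec.1
  have hZ2 : ∀ p, Z p ⊓ cx V (W (n-1)) = ⊥ := fun p => (hZex p).choose_spec.2.1
  have hZ3 : ∀ p, Z p ⊔ cx V (W (n-1)) = HP W G n p := fun p => (hZex p).choose_spec.2.2
  have hZHP : ∀ p, Z p ≤ HP W G n p := fun p => le_trans le_sup_left (le_of_eq (hZ3 p))
  -- Step 2 : conjugation-stable middle piece
  have hBex : ∀ p : ℤ, 2*p = n → ∃ Bp : Submodule ℂ (ℂ ⊗[ℝ] V),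
      Bp ⊓ cx V (W (n-1)) = ⊥ ∧ Bp ⊔ cx V (W (n-1)) = HP W G n p ∧
      Bp.map (conjC V) = Bp := by
    intro p hp
    have hstab : (HP W G n p).map (conjC V) = HP W G n p := by
      rw [mapConj_HP, show n - p = p by omega]
    have hcxR : HP W G n p = cx V (realPart (HP W G n p)) := conjStable_eq_cx hstab
    obtain ⟨C, hC1, hC2, hC3⟩ := exists_compl_inf (realPart (HP W G n p)) (W (n-1))
    refine ⟨cx V C, ?_, ?_, mapConj_cx C⟩
    · rw [← cx_inf, hC2, cx_bot]
    · rw [← cx_sup, hC3, cx_sup, ← hcxR]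
      exact sup_eq_left.mpr (W'_le_HP n p)
  set B : ℤ → Submodule ℂ (ℂ ⊗[ℝ] V) := fun p =>
    if h : n < 2*p then Z p
    else if h' : 2*p < n then (Z (n-p)).map (conjC V)
    else (hBex p (by omega)).choose with hBdefn
  have hBdef : ∀ p, B p = if h : n < 2*p then Z p
      else if h' : 2*p < n then (Z (n-p)).map (conjC V)
      else (hBex p (by omega)).choose := fun p => rfl
  have hB2 : ∀ p, B p ⊓ cx V (W (n-1)) = ⊥ := by
    intro p
    rw [hBdef p]
    split_ifs with h h'
    · exact hZ2 p
    · rw [← mapConj_cx (W (n-1)), ← mapConj_inf, hZ2 (n-p), mapConj_bot]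
    · exact (hBex p (by omega)).choose_spec.1
  have hB3 : ∀ p, B p ⊔ cx V (W (n-1)) = HP W G n p := by
    intro p
    rw [hBdef p]
    split_ifs with h h'
    · exact hZ3 p
    · rw [← mapConj_cx (W (n-1)), ← mapConj_sup, hZ3 (n-p), mapConj_HP,
        show n - (n-p) = p by ring]
    · exact (hBex p (by omega)).choose_spec.2.1
  have hBc : ∀ p, (B p).map (conjC V) = B (n-p) := by
    intro p
    rcases lt_trichotomy n (2*p) with h | h | h
    · rw [hBdef p, dif_pos h, hBdef (n-p), dif_neg (by omega), dif_pos (by omega),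
        show n - (n-p) = p by ring]
    · rw [show n - p = p by omega, hBdef p, dif_neg (by omega), dif_neg (by omega)]
      exact (hBex p (by omega)).choose_spec.2.2
    · rw [hBdef p, dif_neg (by omega), dif_pos h, hBdef (n-p), dif_pos (by omega),
        mapConj_mapConj]
  have hBHP : ∀ p, B p ≤ HP W G n p := fun p => le_trans le_sup_left (le_of_eq (hB3 p))
  have hBWn : ∀ p, B p ≤ cx V (W n) := fun p => le_trans (hBHP p) (HP_le_Wn hG n p)
  have hZWn : ∀ p, Z p ≤ cx V (W n) := fun p => le_trans (hZHP p) (HP_le_Wn hG n p)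
  -- Step 4 : decomposition and independence for a family Y with Y p ⊔ W' = HP n p
  have hDfam : ∀ (Y : ℤ → Submodule ℂ (ℂ ⊗[ℝ] V)),
      (∀ p, Y p ⊔ cx V (W (n-1)) = HP W G n p) → ∀ p,
      DD W G n p = cx V (W (n-1)) ⊔ ⨆ r, ⨆ _ : p ≤ r, Y r := by
    intro Y hY3 p
    rw [DD_decomp hG n p]
    apply le_antisymm
    · apply sup_le le_sup_left
      apply iSup_le; intro r; apply iSup_le; intro hr
      rw [← hY3 r]
      apply sup_le ?_ le_sup_left
      exact le_sup_of_le_right (le_iSup_of_le r (le_iSup_of_le hr le_rfl))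
    · apply sup_le le_sup_left
      apply iSup_le; intro r; apply iSup_le; intro hr
      refine le_sup_of_le_right (le_iSup_of_le r (le_iSup_of_le hr ?_))
      rw [← hY3 r]; exact le_sup_left
  have hWnfam : ∀ (Y : ℤ → Submodule ℂ (ℂ ⊗[ℝ] V)),
      (∀ p, Y p ⊔ cx V (W (n-1)) = HP W G n p) →
      cx V (W n) = cx V (W (n-1)) ⊔ ⨆ p, Y p := by
    intro Y hY3
    have h1 : DD W G n a₁ = cx V (W n) := by
      rw [DD, ha₁ a₁ le_rfl, top_inf_eq]
      exact sup_eq_left.mpr (W'_le_Wn hG n)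
    rw [← h1, hDfam Y hY3 a₁]
    apply le_antisymm
    · apply sup_le le_sup_left
      apply iSup_le; intro r; apply iSup_le; intro hr
      exact le_sup_of_le_right (le_iSup_of_le r le_rfl)
    · apply sup_le le_sup_left
      apply iSup_le; intro r
      rcases le_or_gt a₁ r with h | h
      · exact le_sup_of_le_right (le_iSup_of_le r (le_iSup_of_le h le_rfl))
      · -- G r = ⊤ for r ≤ a₁, but also any Y r ≤ HP ≤ Wn = DD n a₁; show Y r ≤ LHS
        -- Y r ≤ HP n r; and HP n r ≤ DD n a₁?? Use: Y r ≤ Wn = DD n a₁ = W' ⊔ ⨆_{r' ≥ a₁} Y r'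
        have hYWn : Y r ≤ cx V (W n) := by
          refine le_trans ?_ (HP_le_Wn hG n r)
          rw [← hY3 r]; exact le_sup_left
        rw [← h1, hDfam Y hY3 a₁] at hYWn
        exact hYWn
  have hIndfam : ∀ (Y : ℤ → Submodule ℂ (ℂ ⊗[ℝ] V)),
      (∀ p, Y p ⊔ cx V (W (n-1)) = HP W G n p) → (∀ p, Y p ⊓ cx V (W (n-1)) = ⊥) →
      ∀ p, Y p ⊓ (cx V (W (n-1)) ⊔ ⨆ r, ⨆ _ : r ≠ p, Y r) = ⊥ := by
    intro Y hY3 hY2 p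
    have hYHP : ∀ r, Y r ≤ HP W G n r := fun r => le_trans le_sup_left (le_of_eq (hY3 r))
    have hbound : (cx V (W (n-1)) ⊔ ⨆ r, ⨆ _ : r ≠ p, Y r)
        ≤ DD W G n (p+1) ⊔ DS W G n (n + 1 - p) := by
      apply sup_le (le_sup_of_le_left (W'_le_DD n (p+1)))
      apply iSup_le; intro r; apply iSup_le; intro hr
      rcases lt_or_gt_of_ne hr with h | h
      · -- r < p : Y r ≤ HP n r ≤ DS n (n - r) ≤ DS n (n+1-p)
        refine le_sup_of_le_right (le_trans (le_trans (hYHP r) inf_le_right) ?_)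
        exact DS_anti hG n (by omega)
      · -- r > p
        refine le_sup_of_le_left (le_trans (le_trans (hYHP r) inf_le_left) ?_)
        exact DD_anti hG n (by omega)
    have : Y p ⊓ (cx V (W (n-1)) ⊔ ⨆ r, ⨆ _ : r ≠ p, Y r)
        ≤ HP W G n p ⊓ (DD W G n (p+1) ⊔ DS W G n (n + 1 - p)) :=
      inf_le_inf (hYHP p) hbound
    rw [HP_indep hG n p] at this
    rw [eq_bot_iff, ← hY2 p]
    exact le_inf inf_le_left this
  -- instantiate family lemmas
  have hDZ : ∀ p, DD W G n p = cx V (W (n-1)) ⊔ ⨆ r, ⨆ _ : p ≤ r, Z r := hDfam Z hZ3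
  have hBsup : cx V (W n) = cx V (W (n-1)) ⊔ ⨆ p, B p := hWnfam B hB3
  -- complement of Wn
  obtain ⟨T', hT1, hT2, hT3⟩ := exists_compl_inf (⊤ : Submodule ℂ (ℂ ⊗[ℝ] V)) (cx V (W n))
  rw [top_sup_eq] at hT3
  -- generic projections
  have hProj : ∀ (Y : ℤ → Submodule ℂ (ℂ ⊗[ℝ] V)),
      (∀ p, Y p ⊔ cx V (W (n-1)) = HP W G n p) → (∀ p, Y p ⊓ cx V (W (n-1)) = ⊥) →
      ∃ π : ℤ → ((ℂ ⊗[ℝ] V) →ₗ[ℂ] (ℂ ⊗[ℝ] V)),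
        (∀ p x, π p x ∈ Y p) ∧
        (∀ p, ∀ x ∈ Y p, π p x = x) ∧
        (∀ p, ∀ x ∈ (cx V (W (n-1)) ⊔ ⨆ r, ⨆ _ : r ≠ p, Y r) ⊔ T', π p x = 0) := by
    intro Y hY3 hY2
    have hYWn : ∀ p, Y p ≤ cx V (W n) := fun p =>
      le_trans (le_trans le_sup_left (le_of_eq (hY3 p))) (HP_le_Wn hG n p)
    have hKWn : ∀ p, (cx V (W (n-1)) ⊔ ⨆ r, ⨆ _ : r ≠ p, Y r) ≤ cx V (W n) := fun p =>
      sup_le (W'_le_Wn hG n) (iSup_le fun r => iSup_le fun _ => hYWn r)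
    have hcompl : ∀ p, IsCompl (Y p) ((cx V (W (n-1)) ⊔ ⨆ r, ⨆ _ : r ≠ p, Y r) ⊔ T') := by
      intro p
      constructor
      · rw [disjoint_iff, eq_bot_iff]
        rintro x ⟨hxY, hxK⟩
        obtain ⟨y, hy, t, ht, hyt⟩ := Submodule.mem_sup.mp hxK
        have ht0 : t = 0 := by
          have htW : t ∈ T' ⊓ cx V (W n) := by
            refine ⟨ht, ?_⟩
            have : t = x - y := by rw [← hyt]; abel
            rw [this]
            exact Submodule.sub_mem _ (hYWn p hxY) (hKWn p hy)
          rw [hT2] at htW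
          simpa using htW
        have hxy : x = y := by rw [← hyt, ht0, add_zero]
        have : x ∈ Y p ⊓ (cx V (W (n-1)) ⊔ ⨆ r, ⨆ _ : r ≠ p, Y r) := ⟨hxY, hxy ▸ hy⟩
        rw [hIndfam Y hY3 hY2 p] at this
        exact this
      · rw [codisjoint_iff, eq_top_iff]
        intro x _hx
        have hx : x ∈ T' ⊔ cx V (W n) := by rw [hT3]; trivial
        obtain ⟨t, ht, w, hw, htw⟩ := Submodule.mem_sup.mp hx
        have hwY : w ∈ Y p ⊔ ((cx V (W (n-1)) ⊔ ⨆ r, ⨆ _ : r ≠ p, Y r) ⊔ T') := by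
          have h1 : cx V (W n) ≤ Y p ⊔ (cx V (W (n-1)) ⊔ ⨆ r, ⨆ _ : r ≠ p, Y r) := by
            rw [hWnfam Y hY3]
            apply sup_le (le_sup_of_le_right le_sup_left)
            apply iSup_le; intro r
            by_cases hr : r = p
            · subst hr; exact le_sup_left
            · exact le_sup_of_le_right
                (le_sup_of_le_right (le_iSup_of_le r (le_iSup_of_le hr le_rfl)))
          exact sup_le_sup_left (le_sup_left :
            (cx V (W (n-1)) ⊔ ⨆ r, ⨆ _ : r ≠ p, Y r) ≤ _ ⊔ T') (Y p) (h1 hw)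
        rw [← htw]
        exact Submodule.add_mem _
          (Submodule.mem_sup_right (Submodule.mem_sup_right ht)) hwY
    refine ⟨fun p => (Y p).subtype.comp (Submodule.linearProjOfIsCompl _ _ (hcompl p)),
      ?_, ?_, ?_⟩
    · intro p x
      exact Submodule.coe_mem _
    · intro p x hx
      have := Submodule.linearProjOfIsCompl_apply_left (hcompl p) ⟨x, hx⟩
      calc (Y p).subtype.comp (Submodule.linearProjOfIsCompl _ _ (hcompl p)) x
          = ((Submodule.linearProjOfIsCompl _ _ (hcompl p)) x : ℂ ⊗[ℝ] V) := rfl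
        _ = x := congrArg Subtype.val this
    · intro p x hx
      have := Submodule.projectionOnto_apply_of_mem_right (hcompl p) hx
      calc (Y p).subtype.comp (Submodule.linearProjOfIsCompl _ _ (hcompl p)) x
          = ((Submodule.linearProjOfIsCompl _ _ (hcompl p)) x : ℂ ⊗[ℝ] V) := rfl
        _ = 0 := congrArg Subtype.val this
  obtain ⟨ξ, hξmem, hξid, hξker⟩ := hProj B hB3 hB2
  obtain ⟨ζ, hζmem, hζid, hζker⟩ := hProj Z hZ3 hZ2
  have hξW' : ∀ p, ∀ x ∈ cx V (W (n-1)), ξ p x = 0 := fun p x hx =>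
    hξker p x (Submodule.mem_sup_left (Submodule.mem_sup_left hx))
  have hζW' : ∀ p, ∀ x ∈ cx V (W (n-1)), ζ p x = 0 := fun p x hx =>
    hζker p x (Submodule.mem_sup_left (Submodule.mem_sup_left hx))
  have hξBoff : ∀ p r, r ≠ p → ∀ x ∈ B r, ξ p x = 0 := fun p r hr x hx =>
    hξker p x (Submodule.mem_sup_left (Submodule.mem_sup_right
      (Submodule.mem_iSup_of_mem r (Submodule.mem_iSup_of_mem hr hx))))
  have hζZoff : ∀ p r, r ≠ p → ∀ x ∈ Z r, ζ p x = 0 := fun p r hr x hx =>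
    hζker p x (Submodule.mem_sup_left (Submodule.mem_sup_right
      (Submodule.mem_iSup_of_mem r (Submodule.mem_iSup_of_mem hr hx))))
  have hξsub : ∀ p, ∀ x ∈ HP W G n p, x - ξ p x ∈ cx V (W (n-1)) := by
    intro p x hx
    rw [← hB3 p] at hx
    obtain ⟨b, hb, w, hw, hbw⟩ := Submodule.mem_sup.mp hx
    have hξx : ξ p x = b := by
      rw [← hbw, map_add, hξid p b hb, hξW' p w hw, add_zero]
    have : x - ξ p x = w := by rw [hξx, ← hbw]; abel
    rw [this]; exact hw
  -- finite support
  set s₀ : Finset ℤ := Finset.Icc (n - b₁ + 1) (b₁ - 1) with hs₀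
  have hHPW' : ∀ p, p ∉ s₀ → HP W G n p ≤ cx V (W (n-1)) := by
    intro p hp
    rw [hs₀, Finset.mem_Icc] at hp
    push_neg at hp
    rcases le_or_gt b₁ p with h | h
    · refine le_trans inf_le_left ?_
      rw [DD, hb₁ p h, bot_inf_eq, bot_sup_eq]
    · have h2 : b₁ ≤ n - p := by omega
      refine le_trans inf_le_right ?_
      rw [DS, hb₁ (n-p) h2, mapConj_bot, bot_inf_eq, bot_sup_eq]
  have hZ0 : ∀ p, p ∉ s₀ → Z p = ⊥ := by
    intro p hp
    rw [eq_bot_iff, ← hZ2 p]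
    exact le_inf le_rfl (le_trans (hZHP p) (hHPW' p hp))
  have hB0 : ∀ p, p ∉ s₀ → B p = ⊥ := by
    intro p hp
    rw [eq_bot_iff, ← hB2 p]
    exact le_inf le_rfl (le_trans (hBHP p) (hHPW' p hp))
  -- the correction η and the automorphism u
  set η : (ℂ ⊗[ℝ] V) →ₗ[ℂ] (ℂ ⊗[ℝ] V) := ∑ p ∈ s₀, ((ξ p).comp (ζ p) - ζ p) with hηdef
  have hηapp : ∀ x, η x = ∑ p ∈ s₀, (ξ p (ζ p x) - ζ p x) := by
    intro x
    rw [hηdef, LinearMap.sum_apply]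
    apply Finset.sum_congr rfl
    intro p hp
    rw [LinearMap.sub_apply, LinearMap.comp_apply]
  have hηW'0 : ∀ x ∈ cx V (W (n-1)), η x = 0 := by
    intro x hx
    rw [hηapp]
    apply Finset.sum_eq_zero
    intro p hp
    rw [hζW' p x hx]
    simp
  have hηrange : ∀ x, η x ∈ cx V (W (n-1)) := by
    intro x
    rw [hηapp]
    apply Submodule.sum_mem
    intro p hp
    have h1 : ζ p x ∈ HP W G n p := hZHP p (hζmem p x)
    have h2 := hξsub p _ h1
    rw [show ξ p (ζ p x) - ζ p x = -(ζ p x - ξ p (ζ p x)) by abel]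
    exact Submodule.neg_mem _ h2
  have hηη : ∀ x, η (η x) = 0 := fun x => hηW'0 _ (hηrange x)
  set uu : (ℂ ⊗[ℝ] V) ≃ₗ[ℂ] (ℂ ⊗[ℝ] V) := LinearEquiv.ofLinear
    (LinearMap.id + η) (LinearMap.id - η)
    (by
      refine LinearMap.ext fun x => ?_
      simp only [LinearMap.comp_apply, LinearMap.add_apply, LinearMap.sub_apply,
        LinearMap.id_apply, LinearMap.id_coe, id_eq, map_sub, hηη x]
      abel)
    (by
      refine LinearMap.ext fun x => ?_
      simp only [LinearMap.comp_apply, LinearMap.add_apply, LinearMap.sub_apply,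
        LinearMap.id_apply, LinearMap.id_coe, id_eq, map_add, hηη x]
      abel) with huudef
  have huapp : ∀ x, uu x = x + η x := fun x => rfl
  have hufix : ∀ x ∈ cx V (W (n-1)), uu x = x := by
    intro x hx
    rw [huapp, hηW'0 x hx, add_zero]
  have hUnip : Unip W uu := by
    constructor
    · intro i
      rcases le_or_gt i (n-1) with h | h
      · have hle : cx V (W i) ≤ cx V (W (n-1)) := cx_mono (hG.monoW h)
        apply le_antisymm
        · rintro x ⟨a, ha, rfl⟩
          simp only [LinearEquiv.coe_coe]
          rw [hufix a (hle ha)]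
          exact ha
        · intro x hx
          exact ⟨x, hx, by simpa using hufix x (hle hx)⟩
      · have hle : cx V (W (n-1)) ≤ cx V (W i) := cx_mono (hG.monoW (by omega))
        apply le_antisymm
        · rintro x ⟨a, ha, rfl⟩
          simp only [LinearEquiv.coe_coe]
          rw [huapp a]
          exact Submodule.add_mem _ ha (hle (hηrange a))
        · intro x hx
          refine ⟨x - η x, Submodule.sub_mem _ hx (hle (hηrange x)), ?_⟩
          simp only [LinearEquiv.coe_coe]
          rw [huapp, map_sub, hηη x]
          abel
    · intro i x hx
      have hd : uu x - x = η x := by rw [huapp]; abel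
      rw [hd]
      rcases le_or_gt i (n-1) with h | h
      · rw [hηW'0 x (cx_mono (hG.monoW h) hx)]
        exact Submodule.zero_mem _
      · exact cx_mono (hG.monoW (by omega)) (hηrange x)
  -- u maps Z r onto B r
  have huz : ∀ r, ∀ z ∈ Z r, uu z = ξ r z := by
    intro r z hz
    by_cases hr : r ∈ s₀
    · rw [huapp, hηapp, Finset.sum_eq_single r
        (fun p hp hpr => by rw [hζZoff p r (Ne.symm hpr) z hz]; simp)
        (fun habs => absurd hr habs)]
      rw [hζid r z hz]
      abel
    · have hz0 : z = 0 := by rw [hZ0 r hr] at hz; simpa using hz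
      rw [hz0]
      simp
  have huZB : ∀ r, (Z r).map (uu : (ℂ ⊗[ℝ] V) →ₗ[ℂ] (ℂ ⊗[ℝ] V)) = B r := by
    intro r
    apply le_antisymm
    · rintro x ⟨z, hz, rfl⟩
      simp only [LinearEquiv.coe_coe]
      rw [huz r z hz]
      exact hξmem r z
    · intro b hb
      have hbHP : b ∈ HP W G n r := hBHP r hb
      rw [← hZ3 r] at hbHP
      obtain ⟨z, hz, w, hw, hzw⟩ := Submodule.mem_sup.mp hbHP
      refine ⟨z, hz, ?_⟩
      simp only [LinearEquiv.coe_coe]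
      rw [huz r z hz]
      have hzb : z = b - w := by rw [← hzw]; abel
      rw [hzb, map_sub, hξid r b hb, hξW' r w hw, sub_zero]
  -- the key filtration equality
  have hkey : ∀ p, ((G p).map (uu : (ℂ ⊗[ℝ] V) →ₗ[ℂ] (ℂ ⊗[ℝ] V)) ⊓ cx V (W n))
      = (G p ⊓ cx V (W (n-1))) ⊔ ⨆ r, ⨆ _ : p ≤ r, B r := by
    intro p
    have hsub : G p ⊓ cx V (W n) = (G p ⊓ cx V (W (n-1))) ⊔ ⨆ r, ⨆ _ : p ≤ r, Z r := by
      apply le_antisymm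
      · intro x hx
        have hxD : x ∈ DD W G n p := Submodule.mem_sup_left hx
        rw [hDZ p] at hxD
        obtain ⟨w, hw, z, hz, hwz⟩ := Submodule.mem_sup.mp hxD
        have hzG : z ∈ G p := by
          have hle : (⨆ r, ⨆ _ : p ≤ r, Z r) ≤ G p :=
            iSup_le fun r => iSup_le fun hr =>
              le_trans (hZ1 r) (le_trans inf_le_left (hG.antiF hr))
          exact hle hz
        have hwG : w ∈ G p ⊓ cx V (W (n-1)) := by
          refine ⟨?_, hw⟩
          have : w = x - z := by rw [← hwz]; abel
          rw [this]
          exact Submodule.sub_mem _ hx.1 hzG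
        rw [← hwz]
        exact Submodule.add_mem _ (Submodule.mem_sup_left hwG) (Submodule.mem_sup_right hz)
      · apply sup_le (inf_le_inf_left _ (W'_le_Wn hG n))
        apply iSup_le; intro r; apply iSup_le; intro hr
        exact le_inf (le_trans (hZ1 r) (le_trans inf_le_left (hG.antiF hr)))
          (le_trans (hZ1 r) inf_le_right)
    have hmap := congrArg (Submodule.map (uu : (ℂ ⊗[ℝ] V) →ₗ[ℂ] (ℂ ⊗[ℝ] V))) hsub
    rw [hUnip.map_inf_cx (G p) n, Submodule.map_sup, Submodule.map_iSup] at hmap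
    rw [hmap]
    congr 1
    · apply le_antisymm
      · rintro x ⟨a, ha, rfl⟩
        simp only [LinearEquiv.coe_coe]
        rw [hufix a ha.2]
        exact ha
      · intro x hx
        exact ⟨x, hx, by simpa using hufix x hx.2⟩
    · refine iSup_congr fun r => ?_
      rw [Submodule.map_iSup]
      exact iSup_congr fun hr => huZB r
  -- the bottom intersection
  have hrecon : ∀ x ∈ (⨆ p, B p), x = ∑ p ∈ s₀, ξ p x := by
    intro x hx
    refine Submodule.iSup_induction _ (motive := fun y => y = ∑ p ∈ s₀, ξ p y) hx ?_ ?_ ?_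
    · intro r y hy
      by_cases hr : r ∈ s₀
      · rw [Finset.sum_eq_single r
          (fun p hp hpr => hξBoff p r (Ne.symm hpr) y hy)
          (fun habs => absurd hr habs)]
        exact (hξid r y hy).symm
      · have hy0 : y = 0 := by rw [hB0 r hr] at hy; simpa using hy
        rw [hy0]
        simp
    · simp
    · intro a b ha hb
      rw [Finset.sum_congr rfl (fun p _ => map_add (ξ p) a b), Finset.sum_add_distrib,
        ← ha, ← hb]
  have hBbot : (⨆ p, B p) ⊓ cx V (W (n-1)) = ⊥ := by
    rw [eq_bot_iff]
    rintro x ⟨hx1, hx2⟩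
    have hxe := hrecon x hx1
    rw [Finset.sum_eq_zero (fun p _ => hξW' p x hx2)] at hxe
    simpa [hxe] using Submodule.zero_mem (⊥ : Submodule ℂ (ℂ ⊗[ℝ] V))
  exact ⟨uu, B, ξ, hUnip, hufix, hBc, hBWn, hBsup, hBbot, hkey, hξmem, hξid,
    (fun p p' h x hx => hξBoff p p' (Ne.symm h) x hx), hξW', ⟨s₀, hB0⟩⟩
end MHS

namespace MHS
variable {V : Type*} [AddCommGroup V] [Module ℝ V]

set_option maxHeartbeats 1000000 in
theorem driver (W : ℤ → Submodule ℝ V) (F : ℤ → Submodule ℂ (ℂ ⊗[ℝ] V))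
    (h : IsRMHS W F) (a₀ : ℤ) (ha₀ : ∀ i ≤ a₀, W i = ⊥) (k : ℕ) :
    ∃ (b : (ℂ ⊗[ℝ] V) ≃ₗ[ℂ] (ℂ ⊗[ℝ] V)) (B : ℤ → ℤ → Submodule ℂ (ℂ ⊗[ℝ] V))
      (θ : ℤ → ℤ → ((ℂ ⊗[ℝ] V) →ₗ[ℂ] (ℂ ⊗[ℝ] V))),
      Unip W b ∧
      (∀ m p : ℤ, a₀ + k < m → B m p = ⊥) ∧
      (∀ m p : ℤ, (B m p).map (conjC V) = B m (m - p)) ∧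
      (∀ m p : ℤ, B m p ≤ cx V (W m)) ∧
      (∀ m : ℤ, m ≤ a₀ + k → cx V (W m) = cx V (W (m-1)) ⊔ ⨆ p, B m p) ∧
      (∀ m : ℤ, (⨆ p, B m p) ⊓ cx V (W (m-1)) = ⊥) ∧
      (∀ m : ℤ, m ≤ a₀ + k → ∀ p,
        ((F p).map (b : (ℂ ⊗[ℝ] V) →ₗ[ℂ] (ℂ ⊗[ℝ] V))) ⊓ (⨆ r, B m r)
          = ⨆ r, ⨆ _ : p ≤ r, B m r) ∧
      (∀ m : ℤ, m ≤ a₀ + k → ∀ p,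
        ((F p).map (b : (ℂ ⊗[ℝ] V) →ₗ[ℂ] (ℂ ⊗[ℝ] V))) ⊓ cx V (W m)
          = ⨆ m', ⨆ _ : m' ≤ m,
              (((F p).map (b : (ℂ ⊗[ℝ] V) →ₗ[ℂ] (ℂ ⊗[ℝ] V))) ⊓ ⨆ r, B m' r)) ∧
      (∀ m p x, θ m p x ∈ B m p) ∧
      (∀ m p, ∀ x ∈ B m p, θ m p x = x) ∧
      (∀ m p p' : ℤ, p ≠ p' → ∀ x ∈ B m p', θ m p x = 0) ∧
      (∀ m p, ∀ x ∈ cx V (W (m-1)), θ m p x = 0) ∧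
      (∀ m, ∃ t : Finset ℤ, ∀ p ∉ t, B m p = ⊥) := by
  induction k with
  | zero =>
      refine ⟨LinearEquiv.refl ℂ (ℂ ⊗[ℝ] V), fun _ _ => ⊥, fun _ _ => 0,
        Unip.refl, ?_⟩
      have hWbot : ∀ m : ℤ, m ≤ a₀ + 0 → cx V (W m) = ⊥ := by
        intro m hm; rw [ha₀ m (by omega), cx_bot]
      refine ⟨fun _ _ _ => rfl, fun m p => by rw [Submodule.map_bot], fun m p => bot_le,
        ?_, ?_, ?_, ?_, ?_, ?_, ?_, ?_, ?_⟩
      · intro m hm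
        rw [hWbot m hm, hWbot (m-1) (by omega)]
        simp
      · intro m; simp
      · intro m hm p
        rw [iSup_bot]
        simp
      · intro m hm p
        rw [hWbot m hm]
        simp
      · intro m p x; simp
      · intro m p x hx; simp at hx; simp [hx]
      · intro m p p' _ x hx; simp at hx; simp [hx]
      · intro m p x hx; simp
      · intro m; exact ⟨∅, fun p _ => rfl⟩
  | succ k ih =>
      obtain ⟨b, B, θ, hb, hB0, hBc, hBW, hW5, hB6, hB7, hB8, hθ1, hθ2, hθ3, hθ4, hB10⟩ := ih
      set n : ℤ := a₀ + k + 1 with hn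
      have hK : a₀ + (k+1 : ℕ) = n := by rw [hn]; push_cast; ring
      set G : ℤ → Submodule ℂ (ℂ ⊗[ℝ] V) :=
        fun p => (F p).map (b : (ℂ ⊗[ℝ] V) →ₗ[ℂ] (ℂ ⊗[ℝ] V)) with hGdef
      have hG : IsRMHS W G := hb.isRMHS h
      obtain ⟨u, Bn, θn, hu, hufix, hBnc, hBnW, hBnsup, hBnbot, hkey, hθn1, hθn2, hθn3,
        hθn4, hBn10⟩ := stage_step W G hG n
      have hufix' : ∀ m : ℤ, m ≤ n - 1 → ∀ x ∈ cx V (W m), u x = x := by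
        intro m hm x hx
        exact hufix x (cx_mono (h.monoW (by omega)) hx)
      set b' : (ℂ ⊗[ℝ] V) ≃ₗ[ℂ] (ℂ ⊗[ℝ] V) := b.trans u with hb'def
      have hG'eq : ∀ p, (F p).map (b' : (ℂ ⊗[ℝ] V) →ₗ[ℂ] (ℂ ⊗[ℝ] V))
          = (G p).map (u : (ℂ ⊗[ℝ] V) →ₗ[ℂ] (ℂ ⊗[ℝ] V)) := by
        intro p
        rw [hGdef]
        rw [show ((b' : (ℂ ⊗[ℝ] V) ≃ₗ[ℂ] (ℂ ⊗[ℝ] V)) : (ℂ ⊗[ℝ] V) →ₗ[ℂ] (ℂ ⊗[ℝ] V))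
          = ((u : (ℂ ⊗[ℝ] V) →ₗ[ℂ] (ℂ ⊗[ℝ] V)).comp
            ((b : (ℂ ⊗[ℝ] V) ≃ₗ[ℂ] (ℂ ⊗[ℝ] V)) : (ℂ ⊗[ℝ] V) →ₗ[ℂ] (ℂ ⊗[ℝ] V))) from rfl,
          Submodule.map_comp]
      set B' : ℤ → ℤ → Submodule ℂ (ℂ ⊗[ℝ] V) := fun m => if m = n then Bn else B m
        with hB'def
      set θ' : ℤ → ℤ → ((ℂ ⊗[ℝ] V) →ₗ[ℂ] (ℂ ⊗[ℝ] V)) :=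
        fun m => if m = n then θn else θ m with hθ'def
      have hB'n : B' n = Bn := by rw [hB'def]; simp
      have hB'o : ∀ m, m ≠ n → B' m = B m := by intro m hm; rw [hB'def]; simp [hm]
      have hθ'n : θ' n = θn := by rw [hθ'def]; simp
      have hθ'o : ∀ m, m ≠ n → θ' m = θ m := by intro m hm; rw [hθ'def]; simp [hm]
      -- old pieces live below W n-1 and are untouched
      have hSold : ∀ m : ℤ, m ≤ n - 1 → (⨆ r, B m r) ≤ cx V (W (n-1)) := by
        intro m hm
        exact iSup_le fun r => le_trans (hBW m r) (cx_mono (h.monoW hm))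
      have hGoldS : ∀ m : ℤ, m ≤ n - 1 → ∀ p,
          (F p).map (b' : (ℂ ⊗[ℝ] V) →ₗ[ℂ] (ℂ ⊗[ℝ] V)) ⊓ (⨆ r, B m r)
            = G p ⊓ (⨆ r, B m r) := by
        intro m hm p
        rw [hG'eq p]
        exact map_inf_of_fix (G p) (fun x hx => hufix x (hSold m hm hx))
      have hGoldW : ∀ m : ℤ, m ≤ n - 1 →
          ∀ p, (F p).map (b' : (ℂ ⊗[ℝ] V) →ₗ[ℂ] (ℂ ⊗[ℝ] V)) ⊓ cx V (W m)
            = G p ⊓ cx V (W m) := by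
        intro m hm p
        rw [hG'eq p]
        exact map_inf_of_fix (G p) (fun x hx => hufix x (cx_mono (h.monoW hm) hx))
      have hSnWn : (⨆ r, Bn r) ≤ cx V (W n) := iSup_le hBnW
      have hsupBn : ∀ p, (⨆ r, ⨆ _ : p ≤ r, Bn r) ≤ ⨆ r, Bn r :=
        fun p => iSup_le fun r => iSup_le fun _ => le_iSup _ r
      -- the new weight-n splitting
      have hkeyn : ∀ p, (F p).map (b' : (ℂ ⊗[ℝ] V) →ₗ[ℂ] (ℂ ⊗[ℝ] V)) ⊓ (⨆ r, Bn r)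
          = ⨆ r, ⨆ _ : p ≤ r, Bn r := by
        intro p
        apply le_antisymm
        · rintro x ⟨hx1, hx2⟩
          rw [hG'eq p] at hx1
          have hxk : x ∈ (G p ⊓ cx V (W (n-1))) ⊔ ⨆ r, ⨆ _ : p ≤ r, Bn r := by
            rw [← hkey p]
            exact ⟨hx1, hSnWn hx2⟩
          obtain ⟨w, hw, z, hz, hwz⟩ := Submodule.mem_sup.mp hxk
          have hw0 : w = 0 := by
            have hwS : w ∈ (⨆ r, Bn r) ⊓ cx V (W (n-1)) := by
              refine ⟨?_, hw.2⟩
              have : w = x - z := by rw [← hwz]; abel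
              rw [this]
              exact Submodule.sub_mem _ hx2 (hsupBn p hz)
            rw [hBnbot] at hwS
            simpa using hwS
          rw [← hwz, hw0, zero_add]
          exact hz
        · refine le_inf ?_ (hsupBn p)
          rw [hG'eq p]
          have hmid : (⨆ r, ⨆ _ : p ≤ r, Bn r)
              ≤ (G p).map (u : (ℂ ⊗[ℝ] V) →ₗ[ℂ] (ℂ ⊗[ℝ] V)) ⊓ cx V (W n) := by
            rw [hkey p]; exact le_sup_right
          exact le_trans hmid inf_le_left
      -- assemble
      refine ⟨b', B', θ', hb.trans hu, ?_, ?_, ?_, ?_, ?_, ?_, ?_, ?_, ?_, ?_, ?_, ?_⟩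
      · -- bot above
        intro m p hm
        rw [hB'o m (by omega), hB0 m p (by omega)]
      · -- conj
        intro m p
        by_cases hm : m = n
        · subst hm; rw [hB'n]; exact hBnc p
        · rw [hB'o m hm]; exact hBc m p
      · -- ≤ cx W m
        intro m p
        by_cases hm : m = n
        · subst hm; rw [hB'n]; exact hBnW p
        · rw [hB'o m hm]; exact hBW m p
      · -- W m = W (m-1) ⊔ S m
        intro m hm
        by_cases hm' : m = n
        · subst hm'; rw [hB'n]; exact hBnsup
        · rw [hB'o m hm']; exact hW5 m (by omega)
      · -- S m ⊓ W (m-1) = ⊥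
        intro m
        by_cases hm : m = n
        · subst hm; rw [hB'n]; exact hBnbot
        · rw [hB'o m hm]; exact hB6 m
      · -- G' p ⊓ S m
        intro m hm p
        by_cases hm' : m = n
        · subst hm'; rw [hB'n]; exact hkeyn p
        · rw [hB'o m hm', hGoldS m (by omega) p]
          exact hB7 m (by omega) p
      · -- G' p ⊓ cx W m
        intro m hm p
        by_cases hm' : m = n
        · subst hm'
          have step1 : (F p).map (b' : (ℂ ⊗[ℝ] V) →ₗ[ℂ] (ℂ ⊗[ℝ] V)) ⊓ cx V (W n)
              = (G p ⊓ cx V (W (n-1))) ⊔ ⨆ r, ⨆ _ : p ≤ r, Bn r := by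
            rw [hG'eq p]; exact hkey p
          rw [step1, hB8 (n-1) (by omega) p]
          apply le_antisymm
          · apply sup_le
            · apply iSup_le; intro m'; apply iSup_le; intro hm''
              rw [← hGoldS m' (by omega) p, ← hB'o m' (by omega)]
              exact le_iSup_of_le m' (le_iSup_of_le (by omega) le_rfl)
            · rw [← hkeyn p, ← hB'n]
              exact le_iSup_of_le n (le_iSup_of_le le_rfl le_rfl)
          · apply iSup_le; intro m'; apply iSup_le; intro hm''
            rcases eq_or_lt_of_le hm'' with rfl | hlt
            · rw [hB'n, hkeyn p]
              exact le_sup_right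
            · rw [hB'o m' (by omega), hGoldS m' (by omega) p]
              exact le_sup_of_le_left (le_iSup_of_le m' (le_iSup_of_le (by omega) le_rfl))
        · rw [hGoldW m (by omega) p, hB8 m (by omega) p]
          apply le_antisymm
          · apply iSup_le; intro m'; apply iSup_le; intro hm''
            rw [← hGoldS m' (by omega) p, ← hB'o m' (by omega)]
            exact le_iSup_of_le m' (le_iSup_of_le hm'' le_rfl)
          · apply iSup_le; intro m'; apply iSup_le; intro hm''
            rw [hB'o m' (by omega), hGoldS m' (by omega) p]
            exact le_iSup_of_le m' (le_iSup_of_le hm'' le_rfl)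
      · -- θ mem
        intro m p x
        by_cases hm : m = n
        · subst hm; rw [hB'n, hθ'n]; exact hθn1 p x
        · rw [hB'o m hm, hθ'o m hm]; exact hθ1 m p x
      · -- θ id
        intro m p x hx
        by_cases hm : m = n
        · subst hm; rw [hθ'n]; exact hθn2 p x (by rwa [hB'n] at hx)
        · rw [hθ'o m hm]; exact hθ2 m p x (by rwa [hB'o m hm] at hx)
      · -- θ off
        intro m p p' hpp' x hx
        by_cases hm : m = n
        · subst hm; rw [hθ'n]; exact hθn3 p p' hpp' x (by rwa [hB'n] at hx)
        · rw [hθ'o m hm]; exact hθ3 m p p' hpp' x (by rwa [hB'o m hm] at hx)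
      · -- θ kills W (m-1)
        intro m p x hx
        by_cases hm : m = n
        · subst hm; rw [hθ'n]; exact hθn4 p x hx
        · rw [hθ'o m hm]; exact hθ4 m p x hx
      · -- finite support
        intro m
        by_cases hm : m = n
        · subst hm; rw [hB'n]; exact hBn10
        · rw [hB'o m hm]; exact hB10 m

end MHS

set_option maxHeartbeats 1600000 in
theorem exists_R_split_shift'
    (V : Type*) [AddCommGroup V] [Module ℝ V]
    (W : ℤ → Submodule ℝ V) (F : ℤ → Submodule ℂ (ℂ ⊗[ℝ] V))
    (h : MHS.IsRMHS W F) :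
    ∃ b : (ℂ ⊗[ℝ] V) ≃ₗ[ℂ] (ℂ ⊗[ℝ] V),
      (∀ i : ℤ, (MHS.cx V (W i)).map (b : (ℂ ⊗[ℝ] V) →ₗ[ℂ] (ℂ ⊗[ℝ] V)) =
        MHS.cx V (W i)) ∧
      (∀ i : ℤ, ∀ x ∈ MHS.cx V (W i), b x - x ∈ MHS.cx V (W (i - 1))) ∧
      MHS.IsRMHS W
        (fun p => (F p).map (b : (ℂ ⊗[ℝ] V) →ₗ[ℂ] (ℂ ⊗[ℝ] V))) ∧
      (∀ p q : ℤ,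
        (MHS.Ipq W (fun p => (F p).map (b : (ℂ ⊗[ℝ] V) →ₗ[ℂ] (ℂ ⊗[ℝ] V))) p q).map
            (MHS.conjC V) =
          MHS.Ipq W (fun p => (F p).map (b : (ℂ ⊗[ℝ] V) →ₗ[ℂ] (ℂ ⊗[ℝ] V))) q p) := by
  classical
  open MHS in
  obtain ⟨a₀, ha₀⟩ := h.w_bot
  obtain ⟨b₀, hb₀⟩ := h.w_top
  set k : ℕ := (b₀ - a₀).toNat with hkdef
  obtain ⟨b, B, θ, hb, hB0, hBc, hBW, hW5, hB6, hB7, hB8, hθ1, hθ2, hθ3, hθ4, hB10⟩ :=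
    MHS.driver W F h a₀ ha₀ k
  set K : ℤ := a₀ + k with hKdef
  have hKb : b₀ ≤ K := by omega
  have hWtopK : MHS.cx V (W K) = ⊤ := by rw [hb₀ K hKb, MHS.cx_top]
  set G : ℤ → Submodule ℂ (ℂ ⊗[ℝ] V) :=
    fun p => (F p).map (b : (ℂ ⊗[ℝ] V) →ₗ[ℂ] (ℂ ⊗[ℝ] V)) with hGdef
  set SS : ℤ → Submodule ℂ (ℂ ⊗[ℝ] V) := fun m => ⨆ r, B m r with hSSdef
  have hSSW : ∀ m, SS m ≤ MHS.cx V (W m) := fun m => iSup_le fun r => hBW m r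
  have hSS0 : ∀ m : ℤ, K < m → SS m = ⊥ := by
    intro m hm
    rw [hSSdef]
    rw [eq_bot_iff]
    exact iSup_le fun r => le_of_eq (hB0 m r hm)
  have hBbot' : ∀ m p : ℤ, m ≤ a₀ → B m p = ⊥ := by
    intro m p hm
    rw [eq_bot_iff]
    refine le_trans (hBW m p) ?_
    rw [ha₀ m hm, MHS.cx_bot]
  -- global splitting of the filtration
  have hGtop : ∀ p, G p = ⨆ m', ⨆ _ : m' ≤ K, (G p ⊓ SS m') := by
    intro p
    have := hB8 K le_rfl p
    rwa [hWtopK, inf_top_eq] at this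
  have hGS : ∀ m, m ≤ K → ∀ p, G p ⊓ SS m = ⨆ r, ⨆ _ : p ≤ r, B m r := fun m hm p =>
    hB7 m hm p
  have hBG : ∀ m p, B m p ≤ G p := by
    intro m p
    rcases le_or_gt m K with hm | hm
    · refine le_trans ?_ (le_trans (le_of_eq (hGS m hm p).symm) inf_le_left)
      exact le_iSup_of_le p (le_iSup_of_le le_rfl le_rfl)
    · rw [hB0 m p hm]; exact bot_le
  have hGWm : ∀ p (m : ℤ), m ≤ K → G p ⊓ MHS.cx V (W m)
      = ⨆ m', ⨆ r, ⨆ _ : m' ≤ m ∧ p ≤ r, B m' r := by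
    intro p m hm
    rw [hB8 m hm p]
    apply le_antisymm
    · apply iSup_le; intro m'; apply iSup_le; intro hm'
      rw [hGS m' (by omega) p]
      apply iSup_le; intro r; apply iSup_le; intro hr
      exact le_iSup_of_le m' (le_iSup_of_le r (le_iSup_of_le ⟨hm', hr⟩ le_rfl))
    · apply iSup_le; intro m'; apply iSup_le; intro r; apply iSup_le; intro hc
      refine le_iSup_of_le m' (le_iSup_of_le hc.1 ?_)
      rw [hGS m' (by omega) p]
      exact le_iSup_of_le r (le_iSup_of_le hc.2 le_rfl)
  have hGWm' : ∀ p (m : ℤ), G p ⊓ MHS.cx V (W m)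
      ≤ ⨆ m', ⨆ r, ⨆ _ : m' ≤ m ∧ p ≤ r, B m' r := by
    intro p m
    rcases le_or_gt m K with hm | hm
    · exact le_of_eq (hGWm p m hm)
    · refine le_trans (inf_le_inf_left _ le_top) ?_
      rw [← hWtopK, hGWm p K le_rfl]
      apply iSup_le; intro m'; apply iSup_le; intro r; apply iSup_le; intro hc
      exact le_iSup_of_le m' (le_iSup_of_le r (le_iSup_of_le ⟨by omega, hc.2⟩ le_rfl))
  -- conjugate side
  have hσWm' : ∀ q' (m'' : ℤ), MHS.cx V (W m'') ⊓ (G q').map (MHS.conjC V)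
      ≤ ⨆ m', ⨆ r, ⨆ _ : m' ≤ m'' ∧ q' ≤ m' - r, B m' r := by
    intro q' m''
    have h1 : MHS.cx V (W m'') ⊓ (G q').map (MHS.conjC V)
        = ((G q' ⊓ MHS.cx V (W m'')).map (MHS.conjC V)) := by
      rw [MHS.mapConj_inf, MHS.mapConj_cx, inf_comm]
    rw [h1]
    refine le_trans (MHS.mapConj_mono (hGWm' q' m'')) ?_
    rw [MHS.mapConj_iSup]
    apply iSup_le; intro m'
    rw [MHS.mapConj_iSup]
    apply iSup_le; intro r
    rw [MHS.mapConj_iSup]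
    apply iSup_le; intro hc
    rw [hBc m' r]
    exact le_iSup_of_le m' (le_iSup_of_le (m' - r)
      (le_iSup_of_le ⟨hc.1, by omega⟩ le_rfl))
  -- weight projections
  have hchain1 : ∀ j : ℕ, ∀ m : ℤ,
      MHS.cx V (W m) ⊓ (⨆ m', ⨆ _ : m < m' ∧ m' ≤ m + j, SS m') = ⊥ := by
    intro j
    induction j with
    | zero =>
        intro m
        have : (⨆ m', ⨆ _ : m < m' ∧ m' ≤ m + (0:ℕ), SS m') = ⊥ := by
          rw [eq_bot_iff]
          exact iSup_le fun m' => iSup_le fun hc => absurd hc (by omega)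
        rw [this, inf_bot_eq]
    | succ j ih =>
        intro m
        have hsplit : (⨆ m', ⨆ _ : m < m' ∧ m' ≤ m + (j+1:ℕ), SS m')
            = (⨆ m', ⨆ _ : m < m' ∧ m' ≤ m + j, SS m') ⊔ SS (m + j + 1) := by
          apply le_antisymm
          · apply iSup_le; intro m'; apply iSup_le; intro hc
            by_cases hm' : m' ≤ m + j
            · exact le_sup_of_le_left
                (le_iSup_of_le m' (le_iSup_of_le ⟨hc.1, hm'⟩ le_rfl))
            · have : m' = m + j + 1 := by omega
              rw [this]
              exact le_sup_right
          · apply sup_le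
            · apply iSup_le; intro m'; apply iSup_le; intro hc
              exact le_iSup_of_le m' (le_iSup_of_le ⟨hc.1, by omega⟩ le_rfl)
            · exact le_iSup_of_le (m+j+1) (le_iSup_of_le ⟨by omega, by omega⟩ le_rfl)
        rw [hsplit, eq_bot_iff]
        rintro x ⟨hx1, hx2⟩
        obtain ⟨y, hy, z, hz, hyz⟩ := Submodule.mem_sup.mp hx2
        have hz0 : z = 0 := by
          have hzz : z ∈ SS (m+j+1) ⊓ MHS.cx V (W (m+j+1-1)) := by
            refine ⟨hz, ?_⟩
            have hzxy : z = x - y := by rw [← hyz]; abel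
            have hyW : y ∈ MHS.cx V (W (m+j)) := by
              have : (⨆ m', ⨆ _ : m < m' ∧ m' ≤ m + j, SS m') ≤ MHS.cx V (W (m+j)) :=
                iSup_le fun m' => iSup_le fun hc =>
                  le_trans (hSSW m') (MHS.cx_mono (h.monoW hc.2))
              exact this hy
            rw [hzxy, show m+j+1-1 = m+j by ring]
            exact Submodule.sub_mem _ (MHS.cx_mono (h.monoW (by omega)) hx1) hyW
          rw [hB6 (m+j+1)] at hzz
          simpa using hzz
        have hxy : x = y := by rw [← hyz, hz0, add_zero]
        have : x ∈ MHS.cx V (W m) ⊓ (⨆ m', ⨆ _ : m < m' ∧ m' ≤ m + j, SS m') :=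
          ⟨hx1, hxy ▸ hy⟩
        rw [ih m] at this
        exact this
  have hinf : ∀ m : ℤ, MHS.cx V (W m) ⊓ (⨆ m', ⨆ _ : m < m', SS m') = ⊥ := by
    intro m
    have hbound : (⨆ m', ⨆ _ : m < m', SS m')
        ≤ ⨆ m', ⨆ _ : m < m' ∧ m' ≤ m + ((K - m).toNat : ℕ), SS m' := by
      apply iSup_le; intro m'; apply iSup_le; intro hc
      rcases le_or_gt m' K with hm' | hm'
      · exact le_iSup_of_le m' (le_iSup_of_le ⟨hc, by omega⟩ le_rfl)
      · rw [hSS0 m' hm']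
        exact bot_le
    rw [eq_bot_iff, ← hchain1 ((K - m).toNat) m]
    exact le_inf inf_le_left (le_trans inf_le_right hbound)
  have hsuptop : ∀ m : ℤ, MHS.cx V (W m) ⊔ (⨆ m', ⨆ _ : m < m', SS m') = ⊤ := by
    have hdown : ∀ j : ℕ, MHS.cx V (W (K - j)) ⊔ (⨆ m', ⨆ _ : K - j < m', SS m') = ⊤ := by
      intro j
      induction j with
      | zero =>
          rw [show K - ((0:ℕ):ℤ) = K by omega, hWtopK, top_sup_eq]
      | succ j ih =>
          rw [eq_top_iff, ← ih]
          apply sup_le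
          · have hW5' := hW5 (K - j) (by omega)
            rw [hW5']
            apply sup_le
            · exact le_sup_of_le_left (MHS.cx_mono (h.monoW (by omega)))
            · exact le_sup_of_le_right
                (le_iSup_of_le (K - j) (le_iSup_of_le (by omega) le_rfl))
          · apply iSup_le; intro m'; apply iSup_le; intro hc
            exact le_sup_of_le_right
              (le_iSup_of_le m' (le_iSup_of_le (by omega) le_rfl))
    intro m
    rcases le_or_gt m K with hm | hm
    · have := hdown ((K - m).toNat)
      rw [show K - ((K - m).toNat : ℤ) = m by omega] at this
      exact this
    · rw [hb₀ m (by omega), MHS.cx_top, top_sup_eq]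
  have hcomplW : ∀ m : ℤ, IsCompl (MHS.cx V (W m)) (⨆ m', ⨆ _ : m < m', SS m') :=
    fun m => ⟨disjoint_iff.mpr (hinf m), codisjoint_iff.mpr (hsuptop m)⟩
  set ρ : ℤ → ((ℂ ⊗[ℝ] V) →ₗ[ℂ] (ℂ ⊗[ℝ] V)) := fun m =>
    (MHS.cx V (W m)).subtype.comp (Submodule.linearProjOfIsCompl _ _ (hcomplW m))
    with hρdef
  have hρ2 : ∀ m, ∀ x ∈ MHS.cx V (W m), ρ m x = x := by
    intro m x hx
    have := Submodule.linearProjOfIsCompl_apply_left (hcomplW m) ⟨x, hx⟩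
    calc ρ m x = ((Submodule.linearProjOfIsCompl _ _ (hcomplW m)) x : ℂ ⊗[ℝ] V) := rfl
      _ = x := congrArg Subtype.val this
  have hρ3 : ∀ m, ∀ x ∈ (⨆ m', ⨆ _ : m < m', SS m'), ρ m x = 0 := by
    intro m x hx
    have := Submodule.projectionOnto_apply_of_mem_right (hcomplW m) hx
    calc ρ m x = ((Submodule.linearProjOfIsCompl _ _ (hcomplW m)) x : ℂ ⊗[ℝ] V) := rfl
      _ = 0 := congrArg Subtype.val this
  have hρ3' : ∀ (m m' : ℤ), m < m' → ∀ x ∈ SS m', ρ m x = 0 := by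
    intro m m' hmm' x hx
    exact hρ3 m x (Submodule.mem_iSup_of_mem m' (Submodule.mem_iSup_of_mem hmm' hx))
  -- the window
  set t : ℤ → Finset ℤ := fun m => (hB10 m).choose with htdef
  have ht : ∀ m, ∀ p ∉ t m, B m p = ⊥ := fun m => (hB10 m).choose_spec
  set win : Finset (ℤ × ℤ) :=
    (Finset.Icc (a₀+1) K).biUnion (fun m => (t m).image fun p => (m, p)) with hwindef
  have hwin : ∀ (jm jp : ℤ), (jm, jp) ∉ win → B jm jp = ⊥ := by
    intro jm jp hj
    by_cases h1 : jm ∈ Finset.Icc (a₀+1) K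
    · by_cases h2 : jp ∈ t jm
      · exfalso
        apply hj
        rw [hwindef, Finset.mem_biUnion]
        exact ⟨jm, h1, Finset.mem_image.mpr ⟨jp, h2, rfl⟩⟩
      · exact ht jm jp h2
    · rw [Finset.mem_Icc] at h1
      push_neg at h1
      rcases le_or_gt jm a₀ with h3 | h3
      · exact hBbot' jm jp h3
      · exact hB0 jm jp (by omega)
  -- single piece analysis
  have hterm : ∀ (m' r jm jp : ℤ), (jm, jp) ≠ (m', r) → ∀ y ∈ B m' r,
      θ jm jp (ρ jm y) = 0 := by
    intro m' r jm jp hne y hy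
    rcases lt_trichotomy m' jm with hlt | heq | hgt
    · rw [hρ2 jm y (MHS.cx_mono (h.monoW (by omega)) (hBW m' r hy))]
      exact hθ4 jm jp y (MHS.cx_mono (h.monoW (by omega)) (hBW m' r hy))
    · subst heq
      rw [hρ2 m' y (hBW m' r hy)]
      have hrne : jp ≠ r := by
        intro hc; exact hne (by rw [hc])
      exact hθ3 m' jp r hrne y hy
    · rw [hρ3' jm m' hgt y (Submodule.mem_iSup_of_mem r hy)]
      simp
  have htermid : ∀ (m' r : ℤ), ∀ y ∈ B m' r, θ m' r (ρ m' y) = y := by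
    intro m' r y hy
    rw [hρ2 m' y (hBW m' r hy)]
    exact hθ2 m' r y hy
  -- reconstruction
  set T : (ℂ ⊗[ℝ] V) →ₗ[ℂ] (ℂ ⊗[ℝ] V) := ∑ j ∈ win, (θ j.1 j.2).comp (ρ j.1) with hTdef
  have hTapp : ∀ x, T x = ∑ j ∈ win, θ j.1 j.2 (ρ j.1 x) := by
    intro x
    rw [hTdef, LinearMap.sum_apply]
    exact Finset.sum_congr rfl fun j _ => rfl
  have hrecon : ∀ x ∈ (⨆ m', SS m'), x = ∑ j ∈ win, θ j.1 j.2 (ρ j.1 x) := by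
    have hker : (⨆ m', SS m') ≤ LinearMap.ker (LinearMap.id - T) := by
      apply iSup_le; intro m'
      have hSm : SS m' = ⨆ r, B m' r := by rw [hSSdef]
      rw [hSm]
      apply iSup_le; intro r
      intro y hy
      rw [LinearMap.mem_ker, LinearMap.sub_apply, LinearMap.id_apply, hTapp, sub_eq_zero]
      by_cases hbb : B m' r = ⊥
      · have hy0 : y = 0 := by rw [hbb] at hy; simpa using hy
        rw [hy0]
        exact (Finset.sum_eq_zero fun j _ => by simp).symm
      · rw [Finset.sum_eq_single (m', r)
          (fun j _ hj => hterm m' r j.1 j.2 (by simpa using hj) y hy)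
          (fun hnotin => absurd (hwin m' r hnotin) hbb)]
        exact (htermid m' r y hy).symm
    intro x hx
    have := hker hx
    rw [LinearMap.mem_ker, LinearMap.sub_apply, LinearMap.id_apply, sub_eq_zero] at this
    rw [← hTapp]
    exact this
  -- vanish on conditioned sups
  have hvanish : ∀ (C : ℤ → ℤ → Prop) (x : ℂ ⊗[ℝ] V),
      x ∈ (⨆ m', ⨆ r, ⨆ _ : C m' r, B m' r) → ∀ jm jp : ℤ, ¬ C jm jp →
      θ jm jp (ρ jm x) = 0 := by
    intro C x hx jm jp hC
    have hker : (⨆ m', ⨆ r, ⨆ _ : C m' r, B m' r)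
        ≤ LinearMap.ker ((θ jm jp).comp (ρ jm)) := by
      apply iSup_le; intro m'; apply iSup_le; intro r; apply iSup_le; intro hc
      intro y hy
      rw [LinearMap.mem_ker, LinearMap.comp_apply]
      have hne : (jm, jp) ≠ (m', r) := by
        intro hcontra
        apply hC
        rw [show jm = m' from congrArg Prod.fst hcontra,
          show jp = r from congrArg Prod.snd hcontra]
        exact hc
      exact hterm m' r jm jp hne y hy
    have := hker hx
    rwa [LinearMap.mem_ker, LinearMap.comp_apply] at this
  -- membership in full double sup
  have hfull : ∀ (C : ℤ → ℤ → Prop),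
      (⨆ m', ⨆ r, ⨆ _ : C m' r, B m' r) ≤ ⨆ m', SS m' := by
    intro C
    apply iSup_le; intro m'; apply iSup_le; intro r; apply iSup_le; intro _
    exact le_iSup_of_le m' (le_iSup_of_le r le_rfl)
  -- the main Ipq computation
  have hIpq : ∀ p q : ℤ, MHS.Ipq W G p q = B (p+q) p := by
    intro p q
    apply le_antisymm
    · rintro x ⟨hxR, hxL⟩
      have hxR' : x ∈ ⨆ m', ⨆ r, ⨆ _ : m' ≤ p + q ∧ p ≤ r, B m' r := by
        have : x ∈ G p ⊓ MHS.cx V (W (p+q)) := ⟨hxR.2, hxR.1⟩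
        exact hGWm' p (p+q) this
      have hxL' : x ∈ ⨆ m', ⨆ r,
          ⨆ _ : (m' ≤ p + q ∧ q ≤ m' - r) ∨
            (∃ i : ℤ, 2 ≤ i ∧ m' ≤ p + q - i ∧ q - i + 1 ≤ m' - r), B m' r := by
        have hLle : MHS.Lpq W G p q ≤ ⨆ m', ⨆ r,
            ⨆ _ : (m' ≤ p + q ∧ q ≤ m' - r) ∨
              (∃ i : ℤ, 2 ≤ i ∧ m' ≤ p + q - i ∧ q - i + 1 ≤ m' - r), B m' r := by
          rw [MHS.Lpq]
          apply sup_le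
          · refine le_trans (hσWm' q (p+q)) ?_
            apply iSup_le; intro m'; apply iSup_le; intro r; apply iSup_le; intro hc
            exact le_iSup_of_le m' (le_iSup_of_le r (le_iSup_of_le (Or.inl hc) le_rfl))
          · apply iSup_le; intro i; apply iSup_le; intro hi
            refine le_trans (hσWm' (q - i + 1) (p+q-i)) ?_
            apply iSup_le; intro m'; apply iSup_le; intro r; apply iSup_le; intro hc
            exact le_iSup_of_le m' (le_iSup_of_le r
              (le_iSup_of_le (Or.inr ⟨i, hi, hc.1, hc.2⟩) le_rfl))
        exact hLle hxL
      -- reconstruct and kill everything except (p+q, p)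
      have hxe := hrecon x (hfull _ hxR')
      have hzero : ∀ j ∈ win, j ≠ ((p+q : ℤ), p) → θ j.1 j.2 (ρ j.1 x) = 0 := by
        intro j _ hne
        by_cases hC1 : j.1 ≤ p + q ∧ p ≤ j.2
        · have hC2 : ¬ ((j.1 ≤ p + q ∧ q ≤ j.1 - j.2) ∨
              (∃ i : ℤ, 2 ≤ i ∧ j.1 ≤ p + q - i ∧ q - i + 1 ≤ j.1 - j.2)) := by
            rintro (⟨hA, hB⟩ | ⟨i, hi, hA, hB⟩)
            · apply hne
              have hj1 : j.1 = p + q ∧ j.2 = p := by omega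
              exact Prod.ext hj1.1 hj1.2
            · omega
          exact hvanish _ x hxL' j.1 j.2 hC2
        · exact hvanish _ x hxR' j.1 j.2 hC1
      have hsingle : ∑ j ∈ win, θ j.1 j.2 (ρ j.1 x) = θ (p+q) p (ρ (p+q) x) := by
        refine Finset.sum_eq_single ((p+q : ℤ), p) hzero ?_
        intro hnotin
        have hbb := hwin (p+q) p hnotin
        have hmem := hθ1 (p+q) p (ρ (p+q) x)
        rw [hbb] at hmem
        simpa using hmem
      have hfin := hθ1 (p+q) p (ρ (p+q) x)
      rwa [← hxe.trans hsingle] at hfin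
    · -- B (p+q) p ≤ Ipq
      refine le_inf (le_inf (hBW (p+q) p) (hBG (p+q) p)) ?_
      rw [MHS.Lpq]
      refine le_sup_of_le_left (le_inf (hBW (p+q) p) ?_)
      have : B (p+q) p = ((B (p+q) q).map (MHS.conjC V)) := by
        rw [hBc (p+q) q, show p + q - q = p by ring]
      rw [this]
      exact MHS.mapConj_mono (hBG (p+q) q)
  refine ⟨b, hb.1, hb.2, hb.isRMHS h, ?_⟩
  intro p q
  rw [show (fun p => (F p).map (b : (ℂ ⊗[ℝ] V) →ₗ[ℂ] (ℂ ⊗[ℝ] V))) = G from rfl]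
  rw [hIpq p q, hIpq q p, hBc (p+q) p, show p + q - p = q by ring, show q + p = p + q by ring]


/-- Every `ℝ`-mixed Hodge structure `(W, F)` on `V` can be
split: there is a complex automorphism `b` of `V_ℂ` preserving `W_∗ ⊗ ℂ` and
inducing the identity on all graded pieces, such that `(W, bF)` is again an
`ℝ`-mixed Hodge structure which is `ℝ`-split, i.e. its Deligne subspaces
satisfy `σ(Ĩ^{p,q}) = Ĩ^{q,p}`. -/
theorem exists_R_split_shift
    (V : Type*) [AddCommGroup V] [Module ℝ V] [FiniteDimensional ℝ V]
    (W : ℤ → Submodule ℝ V) (F : ℤ → Submodule ℂ (ℂ ⊗[ℝ] V))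
    (h : MHS.IsRMHS W F) :
    ∃ b : (ℂ ⊗[ℝ] V) ≃ₗ[ℂ] (ℂ ⊗[ℝ] V),
      (∀ i : ℤ, (MHS.cx V (W i)).map (b : (ℂ ⊗[ℝ] V) →ₗ[ℂ] (ℂ ⊗[ℝ] V)) =
        MHS.cx V (W i)) ∧
      (∀ i : ℤ, ∀ x ∈ MHS.cx V (W i), b x - x ∈ MHS.cx V (W (i - 1))) ∧
      MHS.IsRMHS W
        (fun p => (F p).map (b : (ℂ ⊗[ℝ] V) →ₗ[ℂ] (ℂ ⊗[ℝ] V))) ∧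
      (∀ p q : ℤ,
        (MHS.Ipq W (fun p => (F p).map (b : (ℂ ⊗[ℝ] V) →ₗ[ℂ] (ℂ ⊗[ℝ] V))) p q).map
            (MHS.conjC V) =
          MHS.Ipq W (fun p => (F p).map (b : (ℂ ⊗[ℝ] V) →ₗ[ℂ] (ℂ ⊗[ℝ] V))) q p) :=
  exists_R_split_shift' V W F h
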